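/- arXiv:1709.02135 — 7 statements merged into one kernel-verified Lean document; each statement's English description precedes it below -/
import Mathlib

section
/- Let a, b, c be positive real numbers and let μ : ℕ → ℝ be defined recursively by μ_1 = b and, for m ≥ 2, μ_m = a·Σ_{p=2}^{m} c^p Σ_{(k_1,…,k_p)} μ_{k_1}⋯μ_{k_p} + b·Σ_{p=1}^{m−1} c^p Σ_{(k_1,…,k_p)} μ_{k_1}⋯μ_{k_p}, where the inner sums run over all tuples of integers k_i ≥ 1 with k_1+⋯+k_p = m in the first sum and k_1+⋯+k_p = m−1 in the second sum. Then for every m ≥ 1, μ_m ≤ (4b(c + a c²))^m / (2(c + a c²)). -/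
open Finset

/-- `compSum μ p m = Σ_{k_1+⋯+k_p = m, k_i ≥ 1} μ_{k_1} ⋯ μ_{k_p}`. -/
noncomputable def compSum (μ : ℕ → ℝ) (p m : ℕ) : ℝ :=
  ∑ k ∈ (Finset.Nat.antidiagonalTuple p m).filter (fun k => ∀ i, 1 ≤ k i),
    ∏ i, μ (k i)

/-- `μ` satisfies the two-term composition-sum recursion with parameters `a`, `b`, `c`:
`μ_1 = b` and, for `m ≥ 2`,
`μ_m = a Σ_{p=2}^m c^p Σ_{k_1+⋯+k_p=m} μ_{k_1}⋯μ_{k_p}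
     + b Σ_{p=1}^{m-1} c^p Σ_{k_1+⋯+k_p=m-1} μ_{k_1}⋯μ_{k_p}`. -/
def IsMuSeq (a b c : ℝ) (μ : ℕ → ℝ) : Prop :=
  μ 1 = b ∧ ∀ m, 2 ≤ m →
    μ m = a * ∑ p ∈ Finset.Icc 2 m, c ^ p * compSum μ p m
        + b * ∑ p ∈ Finset.Icc 1 (m - 1), c ^ p * compSum μ p (m - 1)

namespace MuLePowAux

open PowerSeries

/-- The generating power series of `μ` (with constant coefficient forced to `0`). -/
noncomputable def gs (μ : ℕ → ℝ) : PowerSeries ℝ :=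
  PowerSeries.mk fun k => if k = 0 then 0 else μ k

lemma coeff_gs_pow (μ : ℕ → ℝ) :
    ∀ p m : ℕ, (PowerSeries.coeff (R := ℝ) m) (gs μ ^ p) =
      ∑ k ∈ Finset.Nat.antidiagonalTuple p m, ∏ i, (if k i = 0 then (0:ℝ) else μ (k i)) := by
  intro p
  induction p with
  | zero =>
    intro m
    cases m with
    | zero => simp [Finset.Nat.antidiagonalTuple_zero_zero]
    | succ n => simp [Finset.Nat.antidiagonalTuple_zero_succ]
  | succ p ih =>
    intro m
    rw [pow_succ', PowerSeries.coeff_mul]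
    have hstep : ∀ ij ∈ Finset.HasAntidiagonal.antidiagonal m,
        (PowerSeries.coeff (R := ℝ) ij.1) (gs μ) * (PowerSeries.coeff (R := ℝ) ij.2) (gs μ ^ p)
        = ∑ k ∈ Finset.Nat.antidiagonalTuple p ij.2,
            (if ij.1 = 0 then (0:ℝ) else μ ij.1) *
              ∏ i, (if k i = 0 then (0:ℝ) else μ (k i)) := by
      intro ij _
      rw [ih, Finset.mul_sum, gs, PowerSeries.coeff_mk]
    rw [Finset.sum_congr rfl hstep, Finset.sum_sigma']
    refine Finset.sum_nbij' (fun x => Fin.cons x.1.1 x.2)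
      (fun k => ⟨(k 0, ∑ i, Fin.tail k i), Fin.tail k⟩) ?_ ?_ ?_ ?_ ?_
    · rintro ⟨⟨i, j⟩, k⟩ hx
      simp only [Finset.mem_sigma, Finset.HasAntidiagonal.mem_antidiagonal,
        Finset.Nat.mem_antidiagonalTuple] at hx ⊢
      rw [Fin.sum_cons, hx.2, hx.1]
    · intro k hk
      simp only [Finset.Nat.mem_antidiagonalTuple] at hk
      simp only [Finset.mem_sigma, Finset.HasAntidiagonal.mem_antidiagonal,
        Finset.Nat.mem_antidiagonalTuple]
      refine ⟨?_, trivial⟩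
      rw [← hk, Fin.sum_univ_succ]
      rfl
    · rintro ⟨⟨i, j⟩, k⟩ hx
      simp only [Finset.mem_sigma, Finset.HasAntidiagonal.mem_antidiagonal,
        Finset.Nat.mem_antidiagonalTuple] at hx
      simp only [Fin.cons_zero, Fin.tail_cons]
      have e : (∑ i, k i) = j := hx.2
      rw [e]
    · intro k hk
      exact Fin.cons_self_tail k
    · rintro ⟨⟨i, j⟩, k⟩ hx
      rw [Fin.prod_univ_succ]
      simp [Fin.cons_zero, Fin.cons_succ]

lemma compSum_eq (μ : ℕ → ℝ) (p m : ℕ) :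
    compSum μ p m = (PowerSeries.coeff (R := ℝ) m) (gs μ ^ p) := by
  rw [coeff_gs_pow, ← Finset.sum_filter_add_sum_filter_not
    (Finset.Nat.antidiagonalTuple p m) (fun k => ∀ i, 1 ≤ k i)]
  have h1 : ∑ k ∈ (Finset.Nat.antidiagonalTuple p m).filter (fun k => ∀ i, 1 ≤ k i),
      ∏ i, (if k i = 0 then (0:ℝ) else μ (k i))
      = ∑ k ∈ (Finset.Nat.antidiagonalTuple p m).filter (fun k => ∀ i, 1 ≤ k i),
        ∏ i, μ (k i) := by
    refine Finset.sum_congr rfl fun k hk => ?_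
    simp only [Finset.mem_filter] at hk
    refine Finset.prod_congr rfl fun i _ => ?_
    rw [if_neg (by have := hk.2 i; omega)]
  have h2 : ∑ k ∈ (Finset.Nat.antidiagonalTuple p m).filter (fun k => ¬ ∀ i, 1 ≤ k i),
      ∏ i, (if k i = 0 then (0:ℝ) else μ (k i)) = 0 := by
    refine Finset.sum_eq_zero fun k hk => ?_
    simp only [Finset.mem_filter, not_forall] at hk
    obtain ⟨i, hi⟩ := hk.2
    exact Finset.prod_eq_zero (Finset.mem_univ i) (by rw [if_pos (by omega)])
  rw [h1, h2, add_zero, compSum]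

lemma compSum_one (μ : ℕ → ℝ) (m : ℕ) (hm : 1 ≤ m) : compSum μ 1 m = μ m := by
  rw [compSum_eq, pow_one, gs, PowerSeries.coeff_mk, if_neg (by omega)]

lemma constCoeff_gs (μ : ℕ → ℝ) : PowerSeries.constantCoeff (R := ℝ) (gs μ) = 0 := by
  rw [← PowerSeries.coeff_zero_eq_constantCoeff, gs, PowerSeries.coeff_mk, if_pos rfl]

/-- `W = (c g) (1 - c g)⁻¹ = Σ_{p ≥ 1} (c g)^p`. -/
noncomputable def Ws (μ : ℕ → ℝ) (c : ℝ) : PowerSeries ℝ :=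
  (PowerSeries.C (R := ℝ) c * gs μ) * (1 - PowerSeries.C (R := ℝ) c * gs μ)⁻¹

lemma unit_const (μ : ℕ → ℝ) (c : ℝ) :
    PowerSeries.constantCoeff (R := ℝ) (1 - PowerSeries.C (R := ℝ) c * gs μ) ≠ 0 := by
  simp [constCoeff_gs]

lemma Ws_mul (μ : ℕ → ℝ) (c : ℝ) :
    Ws μ c * (1 - PowerSeries.C (R := ℝ) c * gs μ) = PowerSeries.C (R := ℝ) c * gs μ := by
  have h := PowerSeries.mul_inv_cancel (1 - PowerSeries.C (R := ℝ) c * gs μ) (unit_const μ c)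
  rw [Ws, mul_assoc, mul_comm ((1 - PowerSeries.C (R := ℝ) c * gs μ)⁻¹), h, mul_one]

lemma geom_sum_mul' (μ : ℕ → ℝ) (c : ℝ) (M : ℕ) :
    (∑ p ∈ Finset.Icc 1 M, (PowerSeries.C (R := ℝ) c * gs μ) ^ p) *
        (1 - PowerSeries.C (R := ℝ) c * gs μ)
      = PowerSeries.C (R := ℝ) c * gs μ - (PowerSeries.C (R := ℝ) c * gs μ) ^ (M + 1) := by
  induction M with
  | zero => simp
  | succ M ih =>
    rw [Finset.sum_Icc_succ_top (by omega)]
    ring_nf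
    ring_nf at ih
    linear_combination ih

lemma coeff_Ws (μ : ℕ → ℝ) (c : ℝ) (m M : ℕ) (hmM : m ≤ M) :
    (PowerSeries.coeff (R := ℝ) m) (Ws μ c) = ∑ p ∈ Finset.Icc 1 M, c ^ p * compSum μ p m := by
  have hu := PowerSeries.mul_inv_cancel (1 - PowerSeries.C (R := ℝ) c * gs μ) (unit_const μ c)
  have hS : (∑ p ∈ Finset.Icc 1 M, (PowerSeries.C (R := ℝ) c * gs μ) ^ p)
      = Ws μ c - (PowerSeries.C (R := ℝ) c * gs μ) ^ (M + 1) *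
          (1 - PowerSeries.C (R := ℝ) c * gs μ)⁻¹ := by
    have h := congrArg (· * (1 - PowerSeries.C (R := ℝ) c * gs μ)⁻¹) (geom_sum_mul' μ c M)
    simp only [sub_mul] at h
    rw [mul_assoc, hu, mul_one] at h
    rw [h, Ws]
  have hzero : (PowerSeries.coeff (R := ℝ) m) ((PowerSeries.C (R := ℝ) c * gs μ) ^ (M + 1) *
      (1 - PowerSeries.C (R := ℝ) c * gs μ)⁻¹) = 0 := by
    have hdvd : (PowerSeries.X : PowerSeries ℝ) ^ (M + 1) ∣
        (PowerSeries.C (R := ℝ) c * gs μ) ^ (M + 1) * (1 - PowerSeries.C (R := ℝ) c * gs μ)⁻¹ := by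
      apply Dvd.dvd.mul_right
      apply pow_dvd_pow_of_dvd
      rw [PowerSeries.X_dvd_iff]
      simp [constCoeff_gs]
    exact PowerSeries.X_pow_dvd_iff.mp hdvd m (by omega)
  have h := congrArg (PowerSeries.coeff (R := ℝ) m) hS
  rw [map_sub, hzero, sub_zero, map_sum] at h
  rw [← h]
  refine Finset.sum_congr rfl fun p _ => ?_
  rw [mul_pow, ← map_pow, PowerSeries.coeff_C_mul, compSum_eq]

lemma main_eq (μ : ℕ → ℝ) (a b c : ℝ) (hμ : IsMuSeq a b c μ) :
    gs μ = PowerSeries.C (R := ℝ) b * PowerSeries.X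
      + PowerSeries.C (R := ℝ) a * (Ws μ c - PowerSeries.C (R := ℝ) c * gs μ)
      + PowerSeries.C (R := ℝ) b * (PowerSeries.X * Ws μ c) := by
  have hIcc0 : Finset.Icc 1 0 = (∅ : Finset ℕ) := by
    apply Finset.Icc_eq_empty; omega
  have hW0 : (PowerSeries.coeff (R := ℝ) 0) (Ws μ c) = 0 := by
    rw [coeff_Ws μ c 0 0 le_rfl, hIcc0, Finset.sum_empty]
  ext m
  simp only [map_add, PowerSeries.coeff_C_mul, map_sub]
  rcases m with _ | _ | n
  · rw [hW0]
    simp [gs, PowerSeries.coeff_mk]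
  · have hW1 : (PowerSeries.coeff (R := ℝ) 1) (Ws μ c) = c * μ 1 := by
      rw [coeff_Ws μ c 1 1 le_rfl, Finset.Icc_self, Finset.sum_singleton, pow_one,
        compSum_one μ 1 le_rfl]
    rw [hW1, PowerSeries.coeff_succ_X_mul, hW0]
    simp only [gs, PowerSeries.coeff_mk, PowerSeries.coeff_X]
    norm_num [hμ.1]
  · have hrec := hμ.2 (n + 2) (by omega)
    have e1 : n + 2 - 1 = n + 1 := by omega
    rw [e1] at hrec
    have hWm : (PowerSeries.coeff (R := ℝ) (n + 2)) (Ws μ c)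
        = ∑ p ∈ Finset.Icc 1 (n + 2), c ^ p * compSum μ p (n + 2) :=
      coeff_Ws μ c (n + 2) (n + 2) le_rfl
    have hWm' : (PowerSeries.coeff (R := ℝ) (n + 1)) (Ws μ c)
        = ∑ p ∈ Finset.Icc 1 (n + 1), c ^ p * compSum μ p (n + 1) :=
      coeff_Ws μ c (n + 1) (n + 1) le_rfl
    have hsplit : ∑ p ∈ Finset.Icc 1 (n + 2), c ^ p * compSum μ p (n + 2)
        = c * μ (n + 2) + ∑ p ∈ Finset.Icc 2 (n + 2), c ^ p * compSum μ p (n + 2) := by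
      have hins : Finset.Icc 1 (n + 2) = insert 1 (Finset.Icc 2 (n + 2)) := by
        ext x
        simp only [Finset.mem_Icc, Finset.mem_insert]
        omega
      rw [hins, Finset.sum_insert (by simp [Finset.mem_Icc]), pow_one,
        compSum_one μ (n + 2) (by omega)]
    rw [PowerSeries.coeff_succ_X_mul, hWm, hWm', hsplit]
    simp only [gs, PowerSeries.coeff_mk, PowerSeries.coeff_X]
    rw [if_neg (by omega), if_neg (by omega)]
    rw [hrec]
    ring

lemma quad (μ : ℕ → ℝ) (a b c : ℝ) (hμ : IsMuSeq a b c μ) :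
    gs μ = PowerSeries.C (R := ℝ) b * PowerSeries.X
      + (PowerSeries.C (R := ℝ) c + PowerSeries.C (R := ℝ) a * PowerSeries.C (R := ℝ) c ^ 2) * gs μ ^ 2 := by
  have h1 := main_eq μ a b c hμ
  have h2 := Ws_mul μ c
  linear_combination (1 - PowerSeries.C (R := ℝ) c * gs μ) * h1
    + (PowerSeries.C (R := ℝ) a + PowerSeries.C (R := ℝ) b * PowerSeries.X) * h2

lemma mu_binary (μ : ℕ → ℝ) (a b c : ℝ) (hμ : IsMuSeq a b c μ) (n : ℕ) :
    μ (n + 2) = (c + a * c ^ 2) * ∑ i ∈ Finset.range (n + 3),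
      (if i = 0 then (0:ℝ) else μ i) * (if n + 2 - i = 0 then (0:ℝ) else μ (n + 2 - i)) := by
  have h := congrArg (PowerSeries.coeff (R := ℝ) (n + 2)) (quad μ a b c hμ)
  have hC : (PowerSeries.C (R := ℝ) c + PowerSeries.C (R := ℝ) a * PowerSeries.C (R := ℝ) c ^ 2)
      = PowerSeries.C (R := ℝ) (c + a * c ^ 2) := by
    rw [map_add, map_mul, map_pow]
  rw [hC, map_add, PowerSeries.coeff_C_mul, PowerSeries.coeff_C_mul] at h
  rw [PowerSeries.coeff_X, if_neg (by omega), mul_zero, zero_add] at h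
  rw [pow_two (MuLePowAux.gs μ), PowerSeries.coeff_mul,
    Finset.Nat.sum_antidiagonal_eq_sum_range_succ_mk] at h
  simp only [gs, PowerSeries.coeff_mk] at h
  rw [if_neg (show ¬(n + 2 = 0) by omega)] at h
  exact h

lemma mu_explicit (μ : ℕ → ℝ) (a b c : ℝ) (ha : 0 < a) (hb : 0 < b) (hc : 0 < c)
    (hμ : IsMuSeq a b c μ) :
    ∀ m, 1 ≤ m →
      μ m = (catalan (m - 1) : ℝ) * (b * (c + a * c ^ 2)) ^ m / (c + a * c ^ 2) := by
  have hd : (0:ℝ) < c + a * c ^ 2 := by positivity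
  intro m
  induction m using Nat.strong_induction_on with
  | _ m IH =>
    intro hm
    rcases m with _ | _ | n
    · omega
    · simp only [Nat.sub_self, catalan_zero, Nat.cast_one, one_mul, pow_one]
      rw [hμ.1]
      field_simp
      ring
    · have hbin := mu_binary μ a b c hμ n
      have hS : ∑ i ∈ Finset.range (n + 3),
            (if i = 0 then (0:ℝ) else μ i) *
              (if n + 2 - i = 0 then (0:ℝ) else μ (n + 2 - i))
          = ∑ i ∈ Finset.range (n + 1), μ (i + 1) * μ (n + 1 - i) := by
        rw [Finset.sum_range_succ', Finset.sum_range_succ]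
        have e1 : ∀ i ∈ Finset.range (n + 1),
            (if i + 1 = 0 then (0:ℝ) else μ (i + 1)) *
              (if n + 2 - (i + 1) = 0 then (0:ℝ) else μ (n + 2 - (i + 1)))
            = μ (i + 1) * μ (n + 1 - i) := by
          intro i hi
          simp only [Finset.mem_range] at hi
          rw [if_neg (by omega), if_neg (by omega)]
          have e : n + 2 - (i + 1) = n + 1 - i := by omega
          rw [e]
        rw [Finset.sum_congr rfl e1]
        have e3 : n + 2 - (n + 1 + 1) = 0 := by omega
        rw [e3]
        simp
      rw [hS] at hbin
      have e4 : ∀ i ∈ Finset.range (n + 1), μ (i + 1) * μ (n + 1 - i)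
          = (catalan i : ℝ) * (catalan (n - i) : ℝ) *
              ((b * (c + a * c ^ 2)) ^ (n + 2) / (c + a * c ^ 2) ^ 2) := by
        intro i hi
        simp only [Finset.mem_range] at hi
        rw [IH (i + 1) (by omega) (by omega), IH (n + 1 - i) (by omega) (by omega)]
        have e5 : i + 1 - 1 = i := by omega
        have e6 : n + 1 - i - 1 = n - i := by omega
        rw [e5, e6]
        have e7 : (b * (c + a * c ^ 2)) ^ (i + 1) * (b * (c + a * c ^ 2)) ^ (n + 1 - i)
            = (b * (c + a * c ^ 2)) ^ (n + 2) := by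
          rw [← pow_add]
          congr 1
          omega
        rw [div_mul_div_comm, ← e7]
        ring
      rw [Finset.sum_congr rfl e4, ← Finset.sum_mul] at hbin
      have hcat : ∑ i ∈ Finset.range (n + 1), (catalan i : ℝ) * (catalan (n - i) : ℝ)
          = (catalan (n + 1) : ℝ) := by
        have h := catalan_succ n
        rw [Fin.sum_univ_eq_sum_range (fun i => catalan i * catalan (n - i))] at h
        rw [h]
        push_cast
        rfl
      rw [hcat] at hbin
      rw [hbin]
      have e8 : n + 2 - 1 = n + 1 := by omega
      rw [e8]
      field_simp

end MuLePowAux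

theorem mu_le_pow (a b c : ℝ) (ha : 0 < a) (hb : 0 < b) (hc : 0 < c)
    (μ : ℕ → ℝ) (hμ : IsMuSeq a b c μ) :
    ∀ m, 1 ≤ m →
      μ m ≤ (4 * b * (c + a * c ^ 2)) ^ m / (2 * (c + a * c ^ 2)) := by
  intro m hm
  have hd : (0:ℝ) < c + a * c ^ 2 := by positivity
  rw [MuLePowAux.mu_explicit μ a b c ha hb hc hμ m hm]
  have hcatN : catalan (m - 1) ≤ 4 ^ (m - 1) := by
    calc catalan (m - 1) ≤ Nat.centralBinom (m - 1) := by
          rw [catalan_eq_centralBinom_div]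
          exact Nat.div_le_self _ _
      _ ≤ 4 ^ (m - 1) := by
          have h1 : Nat.centralBinom (m - 1)
              ≤ ∑ k ∈ Finset.range (2 * (m - 1) + 1), (2 * (m - 1)).choose k := by
            apply Finset.single_le_sum (f := fun k => (2 * (m - 1)).choose k)
              (fun k _ => Nat.zero_le _)
            simp only [Finset.mem_range]
            omega
          rw [Nat.sum_range_choose] at h1
          calc Nat.centralBinom (m - 1) ≤ 2 ^ (2 * (m - 1)) := h1
            _ = 4 ^ (m - 1) := by rw [pow_mul]; norm_num
  have hcat : (catalan (m - 1) : ℝ) ≤ 4 ^ (m - 1) := by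
    calc (catalan (m - 1) : ℝ) ≤ ((4 ^ (m - 1) : ℕ) : ℝ) := by exact_mod_cast hcatN
      _ = 4 ^ (m - 1) := by push_cast; ring
  have h4 : (catalan (m - 1) : ℝ) ≤ 4 ^ m / 2 := by
    have e : (4:ℝ) ^ m = 4 ^ (m - 1) * 4 := by
      rw [← pow_succ]
      congr 1
      omega
    rw [e]
    nlinarith [pow_pos (show (0:ℝ) < 4 by norm_num) (m - 1)]
  calc (catalan (m - 1) : ℝ) * (b * (c + a * c ^ 2)) ^ m / (c + a * c ^ 2)
      ≤ (4 ^ m / 2) * (b * (c + a * c ^ 2)) ^ m / (c + a * c ^ 2) := by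
        gcongr
    _ = (4 * b * (c + a * c ^ 2)) ^ m / (2 * (c + a * c ^ 2)) := by
        have e : (4:ℝ) ^ m * (b * (c + a * c ^ 2)) ^ m = (4 * b * (c + a * c ^ 2)) ^ m := by
          rw [← mul_pow]
          congr 1
          ring
        rw [← e]
        field_simp
end

section
/- Let a, b, c be positive real numbers, let n ≥ 1 be an integer, and let μ : ℕ → ℝ be defined recursively by μ_1 = b and, for m ≥ 2, μ_m = a·Σ_{p=2}^{m} c^p Σ_{k_1+⋯+k_p=m, k_i≥1} μ_{k_1}⋯μ_{k_p} + b·Σ_{p=1}^{m−1} c^p Σ_{k_1+⋯+k_p=m−1, k_i≥1} μ_{k_1}⋯μ_{k_p}. Suppose v : ℕ → ℝ is a sequence of nonnegative reals with v_1 ≤ b and, for every m ≥ 2, v_m ≤ a·Σ_{p=2}^{m} c^p Σ_{(k_1,…,k_p)} v_{k_1}⋯v_{k_p} + b·Σ_{p=1}^{m−1} c^p Σ_{(k_1,…,k_p)} v_{k_1}⋯v_{k_p}, where now the inner sums are additionally restricted to tuples with 1 ≤ k_i ≤ n for all i (and k_1+⋯+k_p = m, respectively m−1). Then v_m ≤ μ_m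 for every m ≥ 1. -/
open Finset

/-- `compSumLe n v p m = Σ_{k_1+⋯+k_p = m, 1 ≤ k_i ≤ n} v_{k_1} ⋯ v_{k_p}`. -/
noncomputable def compSumLe (n : ℕ) (v : ℕ → ℝ) (p m : ℕ) : ℝ :=
  ∑ k ∈ (Finset.Nat.antidiagonalTuple p m).filter (fun k => ∀ i, 1 ≤ k i ∧ k i ≤ n),
    ∏ i, v (k i)

lemma tuple_bound {p m : ℕ} {k : Fin p → ℕ}
    (hk : k ∈ Finset.Nat.antidiagonalTuple p m) (i : Fin p) : k i ≤ m := by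
  rw [Finset.Nat.mem_antidiagonalTuple] at hk
  exact hk ▸ Finset.single_le_sum (fun j _ => Nat.zero_le _) (mem_univ i)

lemma tuple_bound2 {p m : ℕ} (hp : 2 ≤ p) {k : Fin p → ℕ}
    (hk : k ∈ Finset.Nat.antidiagonalTuple p m) (h1 : ∀ i, 1 ≤ k i) (i : Fin p) :
    k i ≤ m - 1 := by
  rw [Finset.Nat.mem_antidiagonalTuple] at hk
  obtain ⟨j, hj⟩ := Fintype.exists_ne_of_one_lt_card (by simpa using (show 1 < p by omega)) i
  have hje : j ∈ univ.erase i := Finset.mem_erase.mpr ⟨hj, mem_univ j⟩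
  have h2 : k j ≤ ∑ l ∈ univ.erase i, k l :=
    Finset.single_le_sum (fun l _ => Nat.zero_le _) hje
  have h3 : k i + ∑ l ∈ univ.erase i, k l = ∑ l, k l :=
    Finset.add_sum_erase _ _ (mem_univ i)
  have := h1 j
  omega

lemma compSumLe_le (n p m B : ℕ) (v μ : ℕ → ℝ) (hv0 : ∀ j, 0 ≤ v j)
    (hB : ∀ k ∈ (Finset.Nat.antidiagonalTuple p m).filter (fun k => ∀ i, 1 ≤ k i),
        ∀ i, k i ≤ B)
    (h : ∀ j, 1 ≤ j → j ≤ B → 0 ≤ μ j ∧ v j ≤ μ j) :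
    compSumLe n v p m ≤ compSum μ p m := by
  unfold compSumLe compSum
  have hsub : (Finset.Nat.antidiagonalTuple p m).filter (fun k => ∀ i, 1 ≤ k i ∧ k i ≤ n)
      ⊆ (Finset.Nat.antidiagonalTuple p m).filter (fun k => ∀ i, 1 ≤ k i) := by
    intro k hk
    simp only [mem_filter] at hk ⊢
    exact ⟨hk.1, fun i => (hk.2 i).1⟩
  calc ∑ k ∈ (Finset.Nat.antidiagonalTuple p m).filter (fun k => ∀ i, 1 ≤ k i ∧ k i ≤ n),
        ∏ i, v (k i)
      ≤ ∑ k ∈ (Finset.Nat.antidiagonalTuple p m).filter (fun k => ∀ i, 1 ≤ k i ∧ k i ≤ n),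
        ∏ i, μ (k i) := by
        refine Finset.sum_le_sum fun k hk => Finset.prod_le_prod (fun i _ => hv0 _) ?_
        intro i _
        have hk' := hsub hk
        have h1 : 1 ≤ k i := ((mem_filter.mp hk).2 i).1
        exact (h _ h1 (hB k hk' i)).2
    _ ≤ ∑ k ∈ (Finset.Nat.antidiagonalTuple p m).filter (fun k => ∀ i, 1 ≤ k i),
        ∏ i, μ (k i) := by
        refine Finset.sum_le_sum_of_subset_of_nonneg hsub fun k hk _ => ?_
        refine Finset.prod_nonneg fun i _ => ?_
        exact (h _ ((mem_filter.mp hk).2 i) (hB k hk i)).1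

theorem v_le_mu (a b c : ℝ) (ha : 0 < a) (hb : 0 < b) (hc : 0 < c)
    (n : ℕ) (hn : 1 ≤ n)
    (μ : ℕ → ℝ) (hμ : IsMuSeq a b c μ)
    (v : ℕ → ℝ) (hv_nonneg : ∀ m, 0 ≤ v m) (hv1 : v 1 ≤ b)
    (hv : ∀ m, 2 ≤ m →
      v m ≤ a * ∑ p ∈ Finset.Icc 2 m, c ^ p * compSumLe n v p m
          + b * ∑ p ∈ Finset.Icc 1 (m - 1), c ^ p * compSumLe n v p (m - 1)) :
    ∀ m, 1 ≤ m → v m ≤ μ m := by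
  obtain ⟨hμ1, hμrec⟩ := hμ
  have main : ∀ m, 1 ≤ m → 0 ≤ μ m ∧ v m ≤ μ m := by
    intro m
    induction m using Nat.strong_induction_on with
    | _ m IH =>
      intro hm
      rcases eq_or_lt_of_le hm with h1 | h2
      · rw [← h1, hμ1]
        exact ⟨le_of_lt hb, hv1⟩
      · have hm2 : 2 ≤ m := h2
        have H : ∀ j, 1 ≤ j → j ≤ m - 1 → 0 ≤ μ j ∧ v j ≤ μ j :=
          fun j hj1 hj2 => IH j (by omega) hj1
        have hle : v m ≤ μ m := by
          calc v m ≤ a * ∑ p ∈ Finset.Icc 2 m, c ^ p * compSumLe n v p m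
              + b * ∑ p ∈ Finset.Icc 1 (m - 1), c ^ p * compSumLe n v p (m - 1) := hv m hm2
          _ ≤ a * ∑ p ∈ Finset.Icc 2 m, c ^ p * compSum μ p m
              + b * ∑ p ∈ Finset.Icc 1 (m - 1), c ^ p * compSum μ p (m - 1) := by
              gcongr with p hp p hp
              · exact compSumLe_le n p m (m - 1) v μ hv_nonneg
                  (fun k hk i => tuple_bound2 (mem_Icc.mp hp).1 (mem_filter.mp hk).1
                    (mem_filter.mp hk).2 i) H
              · refine compSumLe_le n p (m - 1) (m - 1) v μ hv_nonneg
                  (fun k hk i => tuple_bound (mem_filter.mp hk).1 i) H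
          _ = μ m := (hμrec m hm2).symm
        exact ⟨le_trans (hv_nonneg m) hle, hle⟩
  intro m hm
  exact (main m hm).2
end

section
/- Let a, b, c be positive real numbers and let μ : ℕ → ℝ be defined recursively by μ_1 = b and, for m ≥ 2, μ_m = a·Σ_{p=2}^{m} c^p Σ_{k_1+⋯+k_p=m, k_i≥1} μ_{k_1}⋯μ_{k_p} + b·Σ_{p=1}^{m−1} c^p Σ_{k_1+⋯+k_p=m−1, k_i≥1} μ_{k_1}⋯μ_{k_p}. Set z₀ = 1/(4b(c + a c²)). Then for every real z with 0 ≤ z < z₀, the series Σ_{m=1}^{∞} μ_m z^m converges and its sum equals (1 − √(1 − 4b(c + a c²)·z)) / (2(c + a c²)). -/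
open Finset

section Aux

open PowerSeries

lemma sum_antidiagonalTuple_succ {M : Type*} [AddCommMonoid M] (p m : ℕ)
    (f : (Fin (p+1) → ℕ) → M) :
    ∑ k ∈ Finset.Nat.antidiagonalTuple (p+1) m, f k
      = ∑ ij ∈ antidiagonal m, ∑ k ∈ Finset.Nat.antidiagonalTuple p ij.2,
          f (Fin.cons ij.1 k) := by
  rw [Finset.sum_sigma']
  refine Finset.sum_nbij'
    (fun (k : Fin (p+1) → ℕ) => (⟨(k 0, ∑ i : Fin p, k i.succ), Fin.tail k⟩ :
      (_ : ℕ × ℕ) × (Fin p → ℕ)))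
    (fun (x : (_ : ℕ × ℕ) × (Fin p → ℕ)) => Fin.cons x.1.1 x.2) ?_ ?_ ?_ ?_ ?_
  · intro k hk
    simp only [Finset.Nat.mem_antidiagonalTuple] at hk
    simp only [Finset.mem_sigma, Finset.Nat.mem_antidiagonalTuple, Finset.HasAntidiagonal.mem_antidiagonal]
    refine ⟨?_, rfl⟩
    rw [← hk, Fin.sum_univ_succ]
  · intro x hx
    simp only [Finset.mem_sigma, Finset.Nat.mem_antidiagonalTuple, Finset.HasAntidiagonal.mem_antidiagonal] at hx
    simp only [Finset.Nat.mem_antidiagonalTuple, Fin.sum_cons, hx.2, hx.1]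
  · intro k hk
    simp [Fin.cons_self_tail]
  · rintro ⟨⟨i, j⟩, g⟩ hx
    simp only [Finset.mem_sigma, Finset.Nat.mem_antidiagonalTuple, Finset.HasAntidiagonal.mem_antidiagonal] at hx
    have h2 : ∑ i2 : Fin p, Fin.cons (α := fun _ => ℕ) i g i2.succ = j := by
      simp only [Fin.cons_succ]; exact hx.2
    simp only [Fin.cons_zero, Fin.tail_cons, h2]
  · intro k hk; rw [Fin.cons_self_tail]

lemma coeff_mk_pow (T : ℕ → ℝ) (p m : ℕ) :
    PowerSeries.coeff (R := ℝ) m ((PowerSeries.mk T) ^ p)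
      = ∑ k ∈ Finset.Nat.antidiagonalTuple p m, ∏ i, T (k i) := by
  induction p generalizing m with
  | zero =>
    rcases Nat.eq_zero_or_pos m with rfl | hm
    · simp [Finset.Nat.antidiagonalTuple_zero_zero]
    · obtain ⟨n, rfl⟩ := Nat.exists_eq_succ_of_ne_zero hm.ne'
      simp [Finset.Nat.antidiagonalTuple_zero_succ, coeff_one]
  | succ p ih =>
    rw [pow_succ, mul_comm, PowerSeries.coeff_mul, sum_antidiagonalTuple_succ]
    refine Finset.sum_congr rfl fun ij hij => ?_
    rw [ih ij.2, Finset.mul_sum]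
    refine Finset.sum_congr rfl fun k hk => ?_
    rw [Fin.prod_univ_succ]
    simp

noncomputable def Tseq (b C : ℝ) : ℕ → ℝ :=
  fun m => if m = 0 then 0 else b ^ m * C ^ (m - 1) * (catalan (m - 1) : ℝ)

lemma Tseq_zero (b C : ℝ) : Tseq b C 0 = 0 := rfl
lemma Tseq_one (b C : ℝ) : Tseq b C 1 = b := by simp [Tseq]
lemma Tseq_succ (b C : ℝ) (n : ℕ) :
    Tseq b C (n + 1) = b ^ (n+1) * C ^ n * (catalan n : ℝ) := by simp [Tseq]

lemma coeff_pow_eq_zero {f : PowerSeries ℝ} (hf : PowerSeries.constantCoeff (R := ℝ) f = 0) :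
    ∀ p m : ℕ, m < p → PowerSeries.coeff (R := ℝ) m (f ^ p) = 0 := by
  intro p
  induction p with
  | zero => intro m hm; omega
  | succ p ih =>
    intro m hm
    rw [pow_succ, mul_comm, PowerSeries.coeff_mul]
    refine Finset.sum_eq_zero fun ij hij => ?_
    rw [Finset.HasAntidiagonal.mem_antidiagonal] at hij
    rcases Nat.eq_zero_or_pos ij.1 with h1 | h1
    · rw [h1, PowerSeries.coeff_zero_eq_constantCoeff, hf, zero_mul]
    · have : ij.2 < p := by omega
      rw [ih ij.2 this, mul_zero]

lemma mkT_quad (b C : ℝ) :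
    PowerSeries.mk (Tseq b C)
      = PowerSeries.C (R := ℝ) C * (PowerSeries.mk (Tseq b C)) ^ 2
        + PowerSeries.C (R := ℝ) b * PowerSeries.X := by
  ext m
  rw [map_add, PowerSeries.coeff_C_mul, PowerSeries.coeff_C_mul, PowerSeries.coeff_mk]
  match m with
  | 0 => simp [sq, PowerSeries.coeff_mul, Tseq_zero]
  | 1 =>
    rw [sq, PowerSeries.coeff_mul]
    have : Finset.HasAntidiagonal.antidiagonal 1 = {((0:ℕ),(1:ℕ)), (1,0)} := rfl
    rw [this]
    simp [Tseq_zero, Tseq_one]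
  | (n+2) =>
    have hsq : PowerSeries.coeff (R := ℝ) (n+2) ((PowerSeries.mk (Tseq b C)) ^ 2)
        = b ^ (n+2) * C ^ n * (catalan (n+1) : ℝ) := by
      rw [sq, PowerSeries.coeff_mul,
        Finset.Nat.sum_antidiagonal_eq_sum_range_succ_mk]
      rw [Finset.sum_range_succ']  -- pull out k = 0
      rw [Finset.sum_range_succ]   -- top term k+1 = n+2
      simp only [PowerSeries.coeff_mk, Tseq_zero, mul_zero, zero_mul, add_zero, Nat.sub_zero,
        Nat.sub_self]
      have hstep : ∀ k ∈ Finset.range (n+1),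
          Tseq b C (k+1) * Tseq b C (n+2-(k+1))
            = b ^ (n+2) * C ^ n * ((catalan k : ℝ) * (catalan (n-k) : ℝ)) := by
        intro k hk
        rw [Finset.mem_range] at hk
        have h2 : n + 2 - (k+1) = (n - k) + 1 := by omega
        rw [h2, Tseq_succ, Tseq_succ]
        have hb : b ^ (k+1) * b ^ (n-k+1) = b ^ (n+2) := by
          rw [← pow_add]; congr 1; omega
        have hC : C ^ k * C ^ (n-k) = C ^ n := by
          rw [← pow_add]; congr 1; omega
        calc b ^ (k+1) * C ^ k * (catalan k : ℝ) * (b ^ (n-k+1) * C ^ (n-k) * (catalan (n-k) : ℝ))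
            = (b ^ (k+1) * b ^ (n-k+1)) * (C ^ k * C ^ (n-k))
              * ((catalan k : ℝ) * (catalan (n-k) : ℝ)) := by ring
          _ = b ^ (n+2) * C ^ n * ((catalan k : ℝ) * (catalan (n-k) : ℝ)) := by rw [hb, hC]
      rw [Finset.sum_congr rfl hstep, ← Finset.mul_sum]
      congr 1
      have := catalan_succ' n
      rw [Finset.Nat.sum_antidiagonal_eq_sum_range_succ_mk] at this
      rw [this]
      push_cast
      rfl
    rw [hsq, Tseq_succ]
    have : PowerSeries.coeff (R := ℝ) (n+2) (PowerSeries.X : PowerSeries ℝ) = 0 := by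
      rw [PowerSeries.coeff_X]; simp
    rw [this, mul_zero, add_zero]
    ring

lemma T_recursion (a b c : ℝ) (n : ℕ) :
    Tseq b (c + a * c ^ 2) (n + 2)
      = a * ∑ p ∈ Finset.Icc 2 (n + 2),
          c ^ p * PowerSeries.coeff (R := ℝ) (n + 2) ((PowerSeries.mk (Tseq b (c + a * c ^ 2))) ^ p)
        + b * ∑ p ∈ Finset.Icc 1 (n + 1),
          c ^ p * PowerSeries.coeff (R := ℝ) (n + 1) ((PowerSeries.mk (Tseq b (c + a * c ^ 2))) ^ p) := by
  set F : PowerSeries ℝ := PowerSeries.mk (Tseq b (c + a * c ^ 2)) with hFdef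
  have hconst : PowerSeries.constantCoeff (R := ℝ) F = 0 := by
    rw [hFdef, ← PowerSeries.coeff_zero_eq_constantCoeff, PowerSeries.coeff_mk]
    rfl
  set Cc : PowerSeries ℝ := PowerSeries.C (R := ℝ) c
  set Ca : PowerSeries ℝ := PowerSeries.C (R := ℝ) a
  set Cb : PowerSeries ℝ := PowerSeries.C (R := ℝ) b
  have hF' : F = (Cc + Ca * Cc ^ 2) * F ^ 2 + Cb * PowerSeries.X := by
    have h1 : PowerSeries.C (R := ℝ) (c + a * c ^ 2) = Cc + Ca * Cc ^ 2 := by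
      rw [map_add, map_mul, map_pow]
    rw [← h1]; exact mkT_quad b (c + a * c ^ 2)
  set G : PowerSeries ℝ := ∑ p ∈ Finset.range (n + 3), (Cc * F) ^ p with hGdef
  have geom : G * (Cc * F - 1) = (Cc * F) ^ (n + 3) - 1 := geom_sum_mul _ _
  have e2 : (Ca * Cc ^ 2 * F ^ 2 + Cb * PowerSeries.X) * G
      = F - Cc ^ (n + 3) * F ^ (n + 4) := by
    calc (Ca * Cc ^ 2 * F ^ 2 + Cb * PowerSeries.X) * G
        = (F - Cc * F ^ 2) * G := by
          nth_rewrite 2 [hF']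
          ring
      _ = -(F * (G * (Cc * F - 1))) := by ring
      _ = -(F * ((Cc * F) ^ (n + 3) - 1)) := by rw [geom]
      _ = F - Cc ^ (n + 3) * F ^ (n + 4) := by ring
  have e3 : F = (Ca * Cc ^ 2 * F ^ 2 + Cb * PowerSeries.X) * G
      + Cc ^ (n + 3) * F ^ (n + 4) := by rw [e2]; ring
  -- take coefficient n+2
  have hcoe := congrArg (fun f => PowerSeries.coeff (R := ℝ) (n + 2) f) e3
  simp only [map_add] at hcoe
  have htail : PowerSeries.coeff (R := ℝ) (n + 2) (Cc ^ (n + 3) * F ^ (n + 4)) = 0 := by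
    have : Cc ^ (n+3) = PowerSeries.C (R := ℝ) (c ^ (n+3)) := by rw [map_pow]
    rw [this, PowerSeries.coeff_C_mul, coeff_pow_eq_zero hconst _ _ (by omega), mul_zero]
  rw [htail, add_zero] at hcoe
  -- expand the product with G
  have hterm : ∀ p : ℕ, (Ca * Cc ^ 2 * F ^ 2 + Cb * PowerSeries.X) * (Cc * F) ^ p
      = PowerSeries.C (R := ℝ) (a * c ^ (p + 2)) * F ^ (p + 2)
        + PowerSeries.C (R := ℝ) (b * c ^ p) * (PowerSeries.X * F ^ p) := by
    intro p
    simp only [map_mul, map_pow, mul_pow]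
    ring
  have hmain : PowerSeries.coeff (R := ℝ) (n + 2)
      ((Ca * Cc ^ 2 * F ^ 2 + Cb * PowerSeries.X) * G)
      = ∑ p ∈ Finset.range (n + 3),
          (a * c ^ (p + 2) * PowerSeries.coeff (R := ℝ) (n + 2) (F ^ (p + 2))
            + b * c ^ p * PowerSeries.coeff (R := ℝ) (n + 1) (F ^ p)) := by
    rw [hGdef, Finset.mul_sum, map_sum]
    refine Finset.sum_congr rfl fun p hp => ?_
    rw [hterm p, map_add, PowerSeries.coeff_C_mul, PowerSeries.coeff_C_mul,
      PowerSeries.coeff_succ_X_mul]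
  rw [hmain, Finset.sum_add_distrib] at hcoe
  -- first sum
  have hs1 : ∑ p ∈ Finset.range (n + 3),
      a * c ^ (p + 2) * PowerSeries.coeff (R := ℝ) (n + 2) (F ^ (p + 2))
      = a * ∑ p ∈ Finset.Icc 2 (n + 2), c ^ p * PowerSeries.coeff (R := ℝ) (n + 2) (F ^ p) := by
    have hext : ∑ p ∈ Finset.Icc 2 (n + 2), c ^ p * PowerSeries.coeff (R := ℝ) (n + 2) (F ^ p)
        = ∑ p ∈ Finset.Icc 2 (n + 4), c ^ p * PowerSeries.coeff (R := ℝ) (n + 2) (F ^ p) := by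
      refine Finset.sum_subset (Finset.Icc_subset_Icc_right (by omega)) ?_
      intro p hp hnp
      simp only [Finset.mem_Icc] at hp hnp
      rw [coeff_pow_eq_zero hconst _ _ (by omega), mul_zero]
    have hreidx : ∑ p ∈ Finset.Icc 2 (n + 4), c ^ p * PowerSeries.coeff (R := ℝ) (n + 2) (F ^ p)
        = ∑ p ∈ Finset.range (n + 3), c ^ (2 + p) * PowerSeries.coeff (R := ℝ) (n + 2) (F ^ (2 + p)) := by
      rw [← Finset.Ico_add_one_right_eq_Icc, Finset.sum_Ico_eq_sum_range]
      congr 1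
    rw [hext, hreidx, Finset.mul_sum]
    refine Finset.sum_congr rfl fun p hp => ?_
    rw [Nat.add_comm 2 p]
    ring
  -- second sum
  have hs2 : ∑ p ∈ Finset.range (n + 3),
      b * c ^ p * PowerSeries.coeff (R := ℝ) (n + 1) (F ^ p)
      = b * ∑ p ∈ Finset.Icc 1 (n + 1), c ^ p * PowerSeries.coeff (R := ℝ) (n + 1) (F ^ p) := by
    have hext : ∑ p ∈ Finset.Icc 1 (n + 1), c ^ p * PowerSeries.coeff (R := ℝ) (n + 1) (F ^ p)
        = ∑ p ∈ Finset.Icc 1 (n + 2), c ^ p * PowerSeries.coeff (R := ℝ) (n + 1) (F ^ p) := by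
      refine Finset.sum_subset (Finset.Icc_subset_Icc_right (by omega)) ?_
      intro p hp hnp
      simp only [Finset.mem_Icc] at hp hnp
      rw [coeff_pow_eq_zero hconst _ _ (by omega), mul_zero]
    have hreidx : ∑ p ∈ Finset.Icc 1 (n + 2), c ^ p * PowerSeries.coeff (R := ℝ) (n + 1) (F ^ p)
        = ∑ p ∈ Finset.range (n + 2), c ^ (1 + p) * PowerSeries.coeff (R := ℝ) (n + 1) (F ^ (1 + p)) := by
      rw [← Finset.Ico_add_one_right_eq_Icc, Finset.sum_Ico_eq_sum_range]
      congr 1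
    rw [hext, hreidx, Finset.mul_sum, Finset.sum_range_succ']
    have h0 : b * c ^ 0 * PowerSeries.coeff (R := ℝ) (n + 1) (F ^ 0) = 0 := by
      norm_num [PowerSeries.coeff_one]
    rw [h0, add_zero]
    refine Finset.sum_congr rfl fun p hp => ?_
    rw [Nat.add_comm 1 p]
    ring
  rw [hs1, hs2] at hcoe
  rw [hFdef] at hcoe
  rw [PowerSeries.coeff_mk] at hcoe
  exact hcoe

lemma compSum_eq_coeff (b C : ℝ) (p m : ℕ) :
    compSum (Tseq b C) p m
      = PowerSeries.coeff (R := ℝ) m ((PowerSeries.mk (Tseq b C)) ^ p) := by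
  rw [coeff_mk_pow]
  refine Finset.sum_subset (Finset.filter_subset _ _) ?_
  intro k hk hnk
  simp only [Finset.mem_filter, hk, true_and, not_forall] at hnk
  obtain ⟨i, hi⟩ := hnk
  refine Finset.prod_eq_zero (Finset.mem_univ i) ?_
  have hki : k i = 0 := by omega
  rw [hki]
  rfl

lemma compSum_congr_le (μ ν : ℕ → ℝ) (p m : ℕ)
    (h : ∀ j, 1 ≤ j → j ≤ m → μ j = ν j) :
    compSum μ p m = compSum ν p m := by
  unfold compSum
  refine Finset.sum_congr rfl fun k hk => ?_
  simp only [Finset.mem_filter, Finset.Nat.mem_antidiagonalTuple] at hk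
  refine Finset.prod_congr rfl fun i _ => ?_
  refine h _ (hk.2 i) ?_
  calc k i ≤ ∑ j, k j := Finset.single_le_sum (fun j _ => Nat.zero_le _) (Finset.mem_univ i)
    _ = m := hk.1

lemma compSum_congr_lt (μ ν : ℕ → ℝ) (p m : ℕ) (hp : 2 ≤ p)
    (h : ∀ j, 1 ≤ j → j < m → μ j = ν j) :
    compSum μ p m = compSum ν p m := by
  unfold compSum
  refine Finset.sum_congr rfl fun k hk => ?_
  simp only [Finset.mem_filter, Finset.Nat.mem_antidiagonalTuple] at hk
  refine Finset.prod_congr rfl fun i _ => ?_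
  refine h _ (hk.2 i) ?_
  -- find another index
  have hplt : 0 < p := by omega
  set i' : Fin p := ⟨if (i : ℕ) = 0 then 1 else 0, by split <;> omega⟩ with hi'
  have hne : i' ≠ i := by
    refine Fin.ne_of_val_ne ?_
    simp only [hi']
    split <;> omega
  have hmem : i' ∈ (Finset.univ : Finset (Fin p)).erase i :=
    Finset.mem_erase.mpr ⟨hne, Finset.mem_univ _⟩
  have h1 : 1 ≤ ∑ j ∈ Finset.univ.erase i, k j :=
    le_trans (hk.2 i') (Finset.single_le_sum (fun j _ => Nat.zero_le _) hmem)
  have h2 : ∑ j ∈ Finset.univ.erase i, k j + k i = m := by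
    rw [Finset.sum_erase_add _ _ (Finset.mem_univ i)]
    exact hk.1
  omega

lemma mu_eq_Tseq (a b c : ℝ) (μ : ℕ → ℝ) (hμ : IsMuSeq a b c μ) :
    ∀ m, 1 ≤ m → μ m = Tseq b (c + a * c ^ 2) m := by
  intro m
  induction m using Nat.strong_induction_on with
  | _ m ih =>
    intro hm
    rcases eq_or_lt_of_le hm with h1 | h2
    · rw [← h1, hμ.1, Tseq]
      norm_num
    · obtain ⟨n, rfl⟩ : ∃ n, m = n + 2 := ⟨m - 2, by omega⟩
      rw [hμ.2 (n + 2) (by omega)]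
      have hsub : (n + 2) - 1 = n + 1 := rfl
      rw [hsub]
      have hc1 : ∀ p ∈ Finset.Icc 2 (n + 2),
          c ^ p * compSum μ p (n + 2)
            = c ^ p * PowerSeries.coeff (R := ℝ) (n + 2)
                ((PowerSeries.mk (Tseq b (c + a * c ^ 2))) ^ p) := by
        intro p hp
        rw [Finset.mem_Icc] at hp
        rw [compSum_congr_lt μ (Tseq b (c + a * c ^ 2)) p (n + 2) hp.1
          (fun j hj1 hj2 => ih j hj2 hj1), compSum_eq_coeff]
      have hc2 : ∀ p ∈ Finset.Icc 1 (n + 1),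
          c ^ p * compSum μ p (n + 1)
            = c ^ p * PowerSeries.coeff (R := ℝ) (n + 1)
                ((PowerSeries.mk (Tseq b (c + a * c ^ 2))) ^ p) := by
        intro p hp
        rw [compSum_congr_le μ (Tseq b (c + a * c ^ 2)) p (n + 1)
          (fun j hj1 hj2 => ih j (by omega) hj1), compSum_eq_coeff]
      rw [Finset.sum_congr rfl hc1, Finset.sum_congr rfl hc2]
      exact (T_recursion a b c n).symm

noncomputable def useq : ℕ → ℝ := fun m => (Nat.centralBinom m : ℝ) / (2 * 4 ^ m)

lemma useq_step (m : ℕ) : (catalan m : ℝ) / 4 ^ (m + 1) = useq m - useq (m + 1) := by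
  have h1 := Nat.succ_mul_centralBinom_succ m
  have h2 := succ_mul_catalan_eq_centralBinom m
  have hc1 : ((m : ℝ) + 1) * (Nat.centralBinom (m + 1) : ℝ)
      = 2 * (2 * m + 1) * (Nat.centralBinom m : ℝ) := by exact_mod_cast h1
  have hc2 : ((m : ℝ) + 1) * (catalan m : ℝ) = (Nat.centralBinom m : ℝ) := by exact_mod_cast h2
  have hm1 : ((m : ℝ) + 1) ≠ 0 := by positivity
  have key2 : ((m : ℝ) + 1) * (2 * (catalan m : ℝ))
      = ((m : ℝ) + 1) * (4 * (Nat.centralBinom m : ℝ) - (Nat.centralBinom (m+1) : ℝ)) := by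
    linear_combination 2 * hc2 + hc1
  have key := mul_left_cancel₀ hm1 key2
  unfold useq
  have h4 : (0 : ℝ) < 4 ^ m := by positivity
  rw [pow_succ]
  field_simp
  linear_combination key

lemma useq_nonneg (m : ℕ) : 0 ≤ useq m := by unfold useq; positivity

lemma useq_zero : useq 0 = 1 / 2 := by
  unfold useq
  rw [Nat.centralBinom_zero]
  norm_num

lemma cat_partial_le (N : ℕ) :
    ∑ m ∈ Finset.range N, (catalan m : ℝ) / 4 ^ (m + 1) ≤ 1 / 2 := by
  rw [Finset.sum_congr rfl fun m _ => useq_step m, Finset.sum_range_sub' useq, useq_zero]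
  have := useq_nonneg N
  linarith

lemma summable_cat_quarter : Summable (fun m => (catalan m : ℝ) / 4 ^ (m + 1)) :=
  summable_of_sum_range_le (fun m => by positivity) cat_partial_le

lemma tsum_cat_quarter_le : (∑' m, (catalan m : ℝ) / 4 ^ (m + 1)) ≤ 1 / 2 :=
  Real.tsum_le_of_sum_range_le (fun m => by positivity) cat_partial_le

lemma useq_le (m : ℕ) : useq m ≤ 1 / 2 := by
  induction m with
  | zero => rw [useq_zero]
  | succ n ih =>
    have := useq_step n
    have hnn : (0:ℝ) ≤ (catalan n : ℝ) / 4 ^ (n + 1) := by positivity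
    linarith

lemma cat_le (m : ℕ) : (catalan m : ℝ) ≤ 2 * 4 ^ m := by
  have h := useq_step m
  have h2 := useq_nonneg (m + 1)
  have h3 := useq_le m
  have h4 : (0:ℝ) < 4 ^ (m+1) := by positivity
  have : (catalan m : ℝ) / 4 ^ (m + 1) ≤ 1 / 2 := by linarith
  rw [div_le_iff₀ h4] at this
  calc (catalan m : ℝ) ≤ 1 / 2 * 4 ^ (m + 1) := this
    _ = 2 * 4 ^ m := by ring

section GF
variable {x : ℝ} (hx0 : 0 ≤ x) (hx : x < 1 / 4)

include hx0 hx in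
lemma summable_catGF : Summable (fun m => (catalan m : ℝ) * x ^ (m + 1)) := by
  have hgeo : Summable (fun m : ℕ => (2 * x) * (4 * x) ^ m) := by
    apply Summable.mul_left
    apply summable_geometric_of_lt_one (by positivity) (by linarith)
  refine Summable.of_nonneg_of_le (fun m => by positivity) (fun m => ?_) hgeo
  calc (catalan m : ℝ) * x ^ (m + 1) ≤ 2 * 4 ^ m * x ^ (m + 1) :=
      mul_le_mul_of_nonneg_right (cat_le m) (by positivity)
    _ = (2 * x) * (4 * x) ^ m := by rw [mul_pow]; ring

include hx0 hx in
lemma catalanGF : HasSum (fun m => (catalan m : ℝ) * x ^ (m + 1))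
    ((1 - Real.sqrt (1 - 4 * x)) / 2) := by
  set f : ℕ → ℝ := fun m => (catalan m : ℝ) * x ^ (m + 1) with hf
  have hsf : Summable f := summable_catGF hx0 hx
  set S : ℝ := ∑' m, f m with hS
  -- S ≤ 2x
  have hS_le : S ≤ 2 * x := by
    have hp : ∀ m, f m ≤ (4 * x) * ((catalan m : ℝ) / 4 ^ (m + 1)) := by
      intro m
      have : x ^ (m + 1) ≤ x * (1 / 4) ^ m := by
        rw [pow_succ, mul_comm]
        exact mul_le_mul_of_nonneg_left (pow_le_pow_left₀ hx0 hx.le m) hx0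
      calc f m = (catalan m : ℝ) * x ^ (m + 1) := rfl
        _ ≤ (catalan m : ℝ) * (x * (1 / 4) ^ m) := by
            apply mul_le_mul_of_nonneg_left this (by positivity)
        _ = (4 * x) * ((catalan m : ℝ) / 4 ^ (m + 1)) := by
            rw [pow_succ]
            field_simp
            rw [mul_assoc _ ((1/4:ℝ)^m), ← mul_pow]; norm_num
    have h2 : S ≤ ∑' m, (4 * x) * ((catalan m : ℝ) / 4 ^ (m + 1)) :=
      Summable.tsum_le_tsum hp hsf (summable_cat_quarter.mul_left _)
    rw [tsum_mul_left] at h2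
    have h3 : (4 * x) * (∑' m, (catalan m : ℝ) / 4 ^ (m + 1)) ≤ (4 * x) * (1 / 2) :=
      mul_le_mul_of_nonneg_left tsum_cat_quarter_le (by positivity)
    linarith
  have hS_nonneg : 0 ≤ S := tsum_nonneg fun m => by positivity
  -- Cauchy product
  have hnorm : Summable (fun m => ‖f m‖) := by
    refine hsf.congr fun m => ?_
    rw [Real.norm_of_nonneg (by positivity)]
  have hcauchy := tsum_mul_tsum_eq_tsum_sum_antidiagonal_of_summable_norm hnorm hnorm
  have hinner : ∀ n : ℕ, ∑ ij ∈ Finset.HasAntidiagonal.antidiagonal n, f ij.1 * f ij.2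
      = (catalan (n + 1) : ℝ) * x ^ (n + 2) := by
    intro n
    rw [catalan_succ']
    push_cast
    rw [Finset.sum_mul]
    refine Finset.sum_congr rfl fun ij hij => ?_
    rw [Finset.HasAntidiagonal.mem_antidiagonal] at hij
    have : x ^ (ij.1 + 1) * x ^ (ij.2 + 1) = x ^ (n + 2) := by
      rw [← pow_add]
      congr 1
      omega
    calc f ij.1 * f ij.2 = (catalan ij.1 : ℝ) * (catalan ij.2 : ℝ)
          * (x ^ (ij.1 + 1) * x ^ (ij.2 + 1)) := by simp only [hf]; ring
      _ = (catalan ij.1 : ℝ) * (catalan ij.2 : ℝ) * x ^ (n + 2) := by rw [this]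
  have hsq : S * S = ∑' n, f (n + 1) := by
    rw [hS, hcauchy]
    exact tsum_congr fun n => by rw [hinner n]
  have hshift : S = f 0 + ∑' n, f (n + 1) := Summable.tsum_eq_zero_add hsf
  have hf0 : f 0 = x := by simp [hf]
  have hquad : S = x + S * S := by rw [hsq, ← hf0]; exact hshift
  -- solve
  have hsq14 : 1 - 4 * x = (1 - 2 * S) ^ 2 := by nlinarith
  have hsqrt : Real.sqrt (1 - 4 * x) = 1 - 2 * S := by
    rw [hsq14, Real.sqrt_sq (by linarith)]
  have : (1 - Real.sqrt (1 - 4 * x)) / 2 = S := by rw [hsqrt]; ring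
  rw [this]
  exact hsf.hasSum
end GF

end Aux

/-- For `0 ≤ z < z₀ = 1/(4b(c + ac²))`, the generating series `Σ_{m≥1} μ_m z^m` converges
with sum `(1 − √(1 − 4b(c + ac²) z)) / (2(c + ac²))`. -/
theorem mu_generating_function (a b c : ℝ) (ha : 0 < a) (hb : 0 < b) (hc : 0 < c)
    (μ : ℕ → ℝ) (hμ : IsMuSeq a b c μ)
    (z : ℝ) (hz0 : 0 ≤ z) (hz : z < 1 / (4 * b * (c + a * c ^ 2))) :
    HasSum (fun m : ℕ => μ (m + 1) * z ^ (m + 1))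
      ((1 - Real.sqrt (1 - 4 * b * (c + a * c ^ 2) * z)) / (2 * (c + a * c ^ 2))) := by
  have hC : 0 < c + a * c ^ 2 := by positivity
  set x : ℝ := b * (c + a * c ^ 2) * z with hxdef
  have hx0 : 0 ≤ x := by positivity
  have hx : x < 1 / 4 := by
    have h4 : 0 < 4 * b * (c + a * c ^ 2) := by positivity
    rw [lt_div_iff₀ h4] at hz
    nlinarith
  have hgf := catalanGF hx0 hx
  have hfun : (fun m : ℕ => μ (m + 1) * z ^ (m + 1))
      = fun m : ℕ => (catalan m : ℝ) * x ^ (m + 1) / (c + a * c ^ 2) := by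
    funext m
    rw [mu_eq_Tseq a b c μ hμ (m + 1) (by omega), Tseq_succ]
    rw [hxdef, show (b * (c + a * c ^ 2) * z) ^ (m + 1)
      = b ^ (m + 1) * ((c + a * c ^ 2) ^ (m + 1)) * z ^ (m + 1) by rw [mul_pow, mul_pow],
      pow_succ]
    field_simp
    ring
  have hsum_eq : (1 - Real.sqrt (1 - 4 * x)) / 2 / (c + a * c ^ 2)
      = (1 - Real.sqrt (1 - 4 * b * (c + a * c ^ 2) * z)) / (2 * (c + a * c ^ 2)) := by
    rw [hxdef, show 4 * (b * (c + a * c ^ 2) * z) = 4 * b * (c + a * c ^ 2) * z by ring,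
      div_div]
  rw [hfun, ← hsum_eq]
  exact hgf.div_const _
end

section
/- Let a, b, c be positive real numbers and let z be a real number with 0 ≤ z < 1/(4b(c + a c²)). Define w = (1 − √(1 − 4b(c + a c²)·z)) / (2(c + a c²)). Then c·w < 1, w ≤ 1/(2(c + a c²)), and w satisfies the functional equation w = a·(1/(1 − c w) − 1 − c w) + b z·(1/(1 − c w) − 1) + b z. -/
/-- Properties of `w = (1 − √(1 − 4b(c + ac²) z)) / (2(c + ac²))` for
`0 ≤ z < 1/(4b(c + ac²))`: one has `c w < 1`, `w ≤ 1/(2(c + ac²))`, and `w` satisfies the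
functional equation `w = a (1/(1 − c w) − 1 − c w) + b z (1/(1 − c w) − 1) + b z`. -/
theorem generating_function_properties (a b c : ℝ) (ha : 0 < a) (hb : 0 < b) (hc : 0 < c)
    (z : ℝ) (hz0 : 0 ≤ z) (hz : z < 1 / (4 * b * (c + a * c ^ 2))) :
    c * ((1 - Real.sqrt (1 - 4 * b * (c + a * c ^ 2) * z)) / (2 * (c + a * c ^ 2))) < 1 ∧
    (1 - Real.sqrt (1 - 4 * b * (c + a * c ^ 2) * z)) / (2 * (c + a * c ^ 2))
      ≤ 1 / (2 * (c + a * c ^ 2)) ∧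
    (1 - Real.sqrt (1 - 4 * b * (c + a * c ^ 2) * z)) / (2 * (c + a * c ^ 2)) =
      a * (1 / (1 - c * ((1 - Real.sqrt (1 - 4 * b * (c + a * c ^ 2) * z)) /
              (2 * (c + a * c ^ 2)))) - 1
          - c * ((1 - Real.sqrt (1 - 4 * b * (c + a * c ^ 2) * z)) / (2 * (c + a * c ^ 2))))
      + b * z * (1 / (1 - c * ((1 - Real.sqrt (1 - 4 * b * (c + a * c ^ 2) * z)) /
              (2 * (c + a * c ^ 2)))) - 1)
      + b * z := by
  have hD : 0 < c + a * c ^ 2 := by positivity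
  have hK : 0 < 4 * b * (c + a * c ^ 2) := by positivity
  have hKz : 4 * b * (c + a * c ^ 2) * z < 1 := by
    have := (lt_div_iff₀ hK).mp hz
    nlinarith
  have hnn : (0:ℝ) ≤ 1 - 4 * b * (c + a * c ^ 2) * z := by linarith
  set s := Real.sqrt (1 - 4 * b * (c + a * c ^ 2) * z) with hs
  have hs0 : 0 ≤ s := Real.sqrt_nonneg _
  have hs2 : s ^ 2 = 1 - 4 * b * (c + a * c ^ 2) * z := Real.sq_sqrt hnn
  have hs1 : s ≤ 1 := by nlinarith
  set w := (1 - s) / (2 * (c + a * c ^ 2)) with hw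
  have hw0 : 0 ≤ w := div_nonneg (by linarith) (by positivity)
  have hwle : w ≤ 1 / (2 * (c + a * c ^ 2)) := by
    apply div_le_div_of_nonneg_right (by linarith) (by positivity) |>.trans_eq rfl
  have hcw : c * w < 1 := by
    have : w ≤ 1 / (2 * (c + a * c ^ 2)) := hwle
    rw [le_div_iff₀ (by positivity)] at this
    nlinarith
  have hquad : (c + a * c ^ 2) * w ^ 2 - w + b * z = 0 := by
    have : w * (2 * (c + a * c ^ 2)) = 1 - s := by
      rw [hw]; field_simp
    nlinarith [this, hs2]
  refine ⟨hcw, hwle, ?_⟩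
  have h1 : 1 - c * w ≠ 0 := by linarith
  field_simp
  have hq : 1 / (1 - w * c) * (1 - w * c) = 1 := one_div_mul_cancel (by nlinarith : (0:ℝ) < 1 - w * c).ne'
  linear_combination (-(1 / (1 - w * c))) * hquad - (w - a * (1 / (1 - w * c)) + a + a * w * c - 1 / (1 - w * c) * b * z + 1 / (1 - w * c) * (a + b * z)) * hq
end

section
/- Let a, b, c be positive real numbers and let μ : ℕ → ℝ be defined recursively by μ_1 = b and, for m ≥ 2, μ_m = a·Σ_{p=2}^{m} c^p Σ_{k_1+⋯+k_p=m, k_i≥1} μ_{k_1}⋯μ_{k_p} + b·Σ_{p=1}^{m−1} c^p Σ_{k_1+⋯+k_p=m−1, k_i≥1} μ_{k_1}⋯μ_{k_p}. Define χ_m = a·Σ_{p=1}^{m} c^p Σ_{k_1+⋯+k_p=m, k_i≥1} μ_{k_1}⋯μ_{k_p} for m ≥ 1. Then for every m ≥ 1, χ_m ≤ a·(4b(c + a c²))^m. -/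
open Finset

lemma compSum_eq_zero (f : ℕ → ℝ) {p m : ℕ} (h : m < p) : compSum f p m = 0 := by
  refine Finset.sum_eq_zero fun k hk => ?_
  simp only [Finset.mem_filter, Finset.Nat.mem_antidiagonalTuple] at hk
  exfalso
  have h1 : (univ : Finset (Fin p)).card • 1 ≤ ∑ i, k i :=
    Finset.card_nsmul_le_sum _ _ _ (fun i _ => hk.2 i)
  simp at h1
  omega

lemma compSum_nonneg {f : ℕ → ℝ} (hf : ∀ k, 1 ≤ k → 0 ≤ f k) (p m : ℕ) :
    0 ≤ compSum f p m := by
  refine Finset.sum_nonneg fun k hk => Finset.prod_nonneg fun i _ => ?_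
  simp only [Finset.mem_filter] at hk
  exact hf _ (hk.2 i)

lemma compSum_congr {f g : ℕ → ℝ} {p m : ℕ}
    (h : ∀ k, 1 ≤ k → k + p ≤ m + 1 → f k = g k) :
    compSum f p m = compSum g p m := by
  refine Finset.sum_congr rfl fun x hx => Finset.prod_congr rfl fun i _ => ?_
  simp only [Finset.mem_filter, Finset.Nat.mem_antidiagonalTuple] at hx
  refine h _ (hx.2 i) ?_
  have h1 : x i + ∑ j ∈ Finset.univ.erase i, x j = m := by
    rw [Finset.add_sum_erase _ _ (Finset.mem_univ i)]
    exact hx.1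
  have h2 : (Finset.univ.erase i).card ≤ ∑ j ∈ Finset.univ.erase i, x j := by
    simpa using Finset.card_nsmul_le_sum (Finset.univ.erase i) x 1 (fun j _ => hx.2 j)
  have h3 : (Finset.univ.erase i).card = p - 1 := by
    rw [Finset.card_erase_of_mem (Finset.mem_univ i)]
    simp
  have h4 : 1 ≤ p := Fin.pos i
  omega

lemma compSum_succ (f : ℕ → ℝ) (p m : ℕ) :
    compSum f (p+1) m = ∑ k ∈ Icc 1 m, f k * compSum f p (m - k) := by
  simp_rw [compSum, Finset.mul_sum]
  rw [Finset.sum_sigma']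
  refine Finset.sum_nbij' (fun x => ⟨x 0, Fin.tail x⟩) (fun σ => Fin.cons σ.1 σ.2)
    ?_ ?_ ?_ ?_ ?_
  · intro x hx
    simp only [Finset.mem_filter, Finset.Nat.mem_antidiagonalTuple, Finset.mem_sigma,
      Finset.mem_Icc] at hx ⊢
    obtain ⟨hsum, hpos⟩ := hx
    have h0 : x 0 ≤ m := by
      rw [← hsum]
      exact Finset.single_le_sum (fun i _ => Nat.zero_le _) (Finset.mem_univ 0)
    have hs : x 0 + ∑ i : Fin p, Fin.tail x i = m := by
      rw [← hsum, Fin.sum_univ_succ]; rfl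
    exact ⟨⟨hpos 0, h0⟩, by omega, fun i => hpos i.succ⟩
  · rintro ⟨k, x⟩ hσ
    simp only [Finset.mem_sigma, Finset.mem_filter, Finset.Nat.mem_antidiagonalTuple,
      Finset.mem_Icc] at hσ ⊢
    obtain ⟨⟨hk1, hkm⟩, hsum, hpos⟩ := hσ
    refine ⟨?_, ?_⟩
    · rw [Fin.sum_cons, hsum]; omega
    · intro i
      refine Fin.cases ?_ ?_ i
      · simpa using hk1
      · intro j; simpa using hpos j
  · intro x hx
    exact Fin.cons_self_tail x
  · rintro ⟨k, x⟩ hσ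
    simp only [Fin.cons_zero, Fin.tail_cons]
  · intro x hx
    rw [Fin.prod_univ_succ]
    rfl

lemma compSum_one (f : ℕ → ℝ) {m : ℕ} (hm : 1 ≤ m) : compSum f 1 m = f m := by
  rw [compSum, Finset.Nat.antidiagonalTuple_one]
  rw [Finset.filter_singleton]
  have : ∀ i : Fin 1, 1 ≤ (![m] : Fin 1 → ℕ) i := by
    intro i
    fin_cases i <;> simpa using hm
  rw [if_pos this, Finset.sum_singleton]
  simp

noncomputable def Sfun (c : ℝ) (f : ℕ → ℝ) (m : ℕ) : ℝ :=
  ∑ p ∈ Icc 1 m, c ^ p * compSum f p m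

lemma Sfun_zero (c : ℝ) (f : ℕ → ℝ) : Sfun c f 0 = 0 := by simp [Sfun]

lemma Sfun_conv (c : ℝ) (f : ℕ → ℝ) {m : ℕ} (hm : 1 ≤ m) :
    Sfun c f m = c * f m + c * ∑ k ∈ Icc 1 (m-1), f k * Sfun c f (m-k) := by
  obtain ⟨n, rfl⟩ : ∃ n, m = n + 1 := ⟨m - 1, by omega⟩
  simp only [Nat.add_sub_cancel]
  rw [Sfun]
  have h1 : (1:ℕ) ∉ Icc 2 (n+1) := by simp
  have hIcc : Icc 1 (n+1) = insert 1 (Icc 2 (n+1)) := by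
    ext x; simp only [Finset.mem_Icc, Finset.mem_insert]; omega
  rw [hIcc, Finset.sum_insert h1, pow_one, compSum_one f (by omega)]
  congr 1
  have hIcc2 : Icc 2 (n+1) = (Icc 1 n).map (addRightEmbedding 1) := by
    rw [Finset.map_add_right_Icc]
  rw [hIcc2, Finset.sum_map]
  simp only [addRightEmbedding_apply]
  have hterm : ∀ q ∈ Icc 1 n, c ^ (q+1) * compSum f (q+1) (n+1)
      = ∑ k ∈ Icc 1 (n+1), f k * (c ^ (q+1) * compSum f q (n+1-k)) := by
    intro q hq
    rw [compSum_succ, Finset.mul_sum]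
    exact Finset.sum_congr rfl fun k hk => by ring
  rw [Finset.sum_congr rfl hterm, Finset.sum_comm]
  have hlast : ∑ q ∈ Icc 1 n, f (n+1) * (c ^ (q+1) * compSum f q (n+1-(n+1))) = 0 := by
    refine Finset.sum_eq_zero fun q hq => ?_
    rw [Nat.sub_self, compSum_eq_zero f (by simp at hq; omega), mul_zero, mul_zero]
  rw [Finset.sum_Icc_succ_top (by omega : 1 ≤ n + 1), hlast, add_zero, Finset.mul_sum]
  refine Finset.sum_congr rfl fun k hk => ?_
  simp only [Finset.mem_Icc] at hk
  have hsub : Icc 1 (n+1-k) ⊆ Icc 1 n := by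
    intro x; simp only [Finset.mem_Icc]; omega
  have hz : ∀ q ∈ Icc 1 n, q ∉ Icc 1 (n+1-k) → c ^ q * compSum f q (n+1-k) = 0 := by
    intro q hq hq'
    simp only [Finset.mem_Icc] at hq hq'
    rw [compSum_eq_zero f (by omega), mul_zero]
  rw [Sfun, Finset.sum_subset hsub hz, Finset.mul_sum, Finset.mul_sum]
  exact Finset.sum_congr rfl fun q hq => by ring

lemma catConv (n : ℕ) :
    ∑ i ∈ range (n+1), catalan i * catalan (n-i) = catalan (n+1) := by
  rw [catalan_succ, ← Fin.sum_univ_eq_sum_range]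

lemma cat_le_four_pow (n : ℕ) : catalan n ≤ 4 ^ n := by
  have h1 : catalan n ≤ Nat.centralBinom n := by
    rw [← succ_mul_catalan_eq_centralBinom]
    exact Nat.le_mul_of_pos_left _ (Nat.succ_pos n)
  have h2 : Nat.centralBinom n ≤ (2*n+1).choose n :=
    Nat.choose_le_choose n (by omega)
  exact h1.trans (h2.trans (Nat.choose_middle_le_pow n))

noncomputable def nuf (b d : ℝ) (m : ℕ) : ℝ := (catalan (m-1) : ℝ) * b ^ m * d ^ (m-1)

lemma nuf_one (b d : ℝ) : nuf b d 1 = b := by simp [nuf, catalan_zero]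

lemma nuf_nonneg {b d : ℝ} (hb : 0 ≤ b) (hd : 0 ≤ d) (m : ℕ) : 0 ≤ nuf b d m := by
  apply mul_nonneg (mul_nonneg (Nat.cast_nonneg _) (pow_nonneg hb _)) (pow_nonneg hd _)

lemma sum_Icc_one {M : Type*} [AddCommMonoid M] (g : ℕ → M) (n : ℕ) :
    ∑ k ∈ Icc 1 (n+1), g k = ∑ i ∈ range (n+1), g (i+1) := by
  have hIcc : Icc 1 (n+1) = (range (n+1)).map (addRightEmbedding 1) := by
    ext x
    simp only [Finset.mem_Icc, Finset.mem_map, Finset.mem_range, addRightEmbedding_apply]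
    constructor
    · rintro ⟨h1, h2⟩; exact ⟨x - 1, by omega, by omega⟩
    · rintro ⟨y, hy, rfl⟩; omega
  rw [hIcc, Finset.sum_map]
  rfl

lemma nuf_conv (b d : ℝ) {m : ℕ} (hm : 2 ≤ m) :
    d * ∑ k ∈ Icc 1 (m-1), nuf b d k * nuf b d (m-k) = nuf b d m := by
  obtain ⟨n, rfl⟩ : ∃ n, m = n + 2 := ⟨m - 2, by omega⟩
  have hIcc : (n+2) - 1 = n + 1 := by omega
  rw [hIcc, sum_Icc_one]
  have hterm : ∀ i ∈ range (n+1), nuf b d (i+1) * nuf b d (n+2-(i+1))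
      = ((catalan i * catalan (n-i) : ℕ) : ℝ) * (b ^ (n+2) * d ^ n) := by
    intro i hi
    simp only [Finset.mem_range] at hi
    have e1 : n+2-(i+1) = (n-i)+1 := by omega
    rw [nuf, nuf, e1]
    have e2 : (i+1) - 1 = i := by omega
    have e3 : ((n-i)+1) - 1 = n-i := by omega
    rw [e2, e3]
    have hb : b^(i+1) * b^((n-i)+1) = b^(n+2) := by rw [← pow_add]; congr 1; omega
    have hd : d^i * d^(n-i) = d^n := by rw [← pow_add]; congr 1; omega
    rw [← hb, ← hd]
    push_cast
    ring
  rw [Finset.sum_congr rfl hterm, ← Finset.sum_mul, ← Nat.cast_sum, catConv]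
  rw [nuf]
  have e4 : (n+2) - 1 = n + 1 := by omega
  rw [e4]
  ring

lemma Sfun_one (c : ℝ) (f : ℕ → ℝ) : Sfun c f 1 = c * f 1 := by
  simp [Sfun, compSum_one f le_rfl]

lemma keyId (a b c : ℝ) :
    ∀ m, 2 ≤ m →
      a * Sfun c (nuf b (c+a*c^2)) m + b * Sfun c (nuf b (c+a*c^2)) (m-1)
        = (1+a*c) * nuf b (c+a*c^2) m := by
  intro M
  induction M using Nat.strong_induction_on with
  | _ M ih =>
    intro hM
    obtain ⟨n, rfl⟩ : ∃ n, M = n + 2 := ⟨M - 2, by omega⟩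
    set d := c + a*c^2 with hd
    set ν := nuf b d with hν
    set W := Sfun c ν with hW
    have e1 : n + 2 - 1 = n + 1 := rfl
    have e0 : n + 1 - 1 = n := rfl
    have h2 : W (n+2) = c * ν (n+2) + c * ∑ k ∈ Icc 1 (n+1), ν k * W (n+2-k) := by
      have := Sfun_conv c ν (show 1 ≤ n+2 by omega); rwa [e1] at this
    have h1 : W (n+1) = c * ν (n+1) + c * ∑ k ∈ Icc 1 n, ν k * W (n+1-k) := by
      have := Sfun_conv c ν (show 1 ≤ n+1 by omega); rwa [e0] at this
    have hsplit : ∑ k ∈ Icc 1 (n+1), ν k * W (n+2-k)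
        = (∑ k ∈ Icc 1 n, ν k * W (n+2-k)) + ν (n+1) * (c * b) := by
      rw [Finset.sum_Icc_succ_top (by omega : 1 ≤ n+1),
        show n+2-(n+1) = 1 from by omega, hW, Sfun_one, hν, nuf_one]
    have hsum : ∀ k ∈ Icc 1 n,
        a * (ν k * W (n+2-k)) + b * (ν k * W (n+1-k)) = (1+a*c) * (ν k * ν (n+2-k)) := by
      intro k hk
      simp only [Finset.mem_Icc] at hk
      have hih := ih (n+2-k) (by omega) (by omega)
      rw [show n+2-k-1 = n+1-k from by omega] at hih
      calc a * (ν k * W (n+2-k)) + b * (ν k * W (n+1-k))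
          = ν k * (a * W (n+2-k) + b * W (n+1-k)) := by ring
        _ = ν k * ((1+a*c) * ν (n+2-k)) := by rw [hih]
        _ = (1+a*c) * (ν k * ν (n+2-k)) := by ring
    have F : a * (∑ k ∈ Icc 1 n, ν k * W (n+2-k)) + b * (∑ k ∈ Icc 1 n, ν k * W (n+1-k))
        = (1+a*c) * ∑ k ∈ Icc 1 n, ν k * ν (n+2-k) := by
      rw [Finset.mul_sum, Finset.mul_sum, Finset.mul_sum, ← Finset.sum_add_distrib]
      exact Finset.sum_congr rfl hsum
    have G : d * ((∑ k ∈ Icc 1 n, ν k * ν (n+2-k)) + ν (n+1) * b) = ν (n+2) := by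
      have hg := nuf_conv b d (show 2 ≤ n+2 by omega)
      rw [e1, Finset.sum_Icc_succ_top (by omega : 1 ≤ n+1),
        show n+2-(n+1) = 1 from by omega, nuf_one] at hg
      exact hg
    rw [e1, h2, h1, hsplit]
    linear_combination c * F + G - ((∑ k ∈ Icc 1 n, ν k * ν (n+2-k)) + ν (n+1) * b) * hd

/-- split off the `p = 1` term of `Sfun`. -/
lemma Sfun_split (c : ℝ) (f : ℕ → ℝ) {m : ℕ} (hm : 1 ≤ m) :
    Sfun c f m = c * f m + ∑ p ∈ Icc 2 m, c ^ p * compSum f p m := by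
  have h1 : (1:ℕ) ∉ Icc 2 m := by simp
  have hIcc : Icc 1 m = insert 1 (Icc 2 m) := by
    ext x; simp only [Finset.mem_Icc, Finset.mem_insert]; omega
  rw [Sfun, hIcc, Finset.sum_insert h1, pow_one, compSum_one f hm]

lemma muEq (a b c : ℝ) (μ : ℕ → ℝ) (hμ : IsMuSeq a b c μ) :
    ∀ m, 1 ≤ m → μ m = nuf b (c+a*c^2) m := by
  intro M
  induction M using Nat.strong_induction_on with
  | _ M ih =>
    intro hM
    set d := c + a*c^2 with hd
    rcases eq_or_lt_of_le hM with h1 | h2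
    · rw [← h1, hμ.1, nuf_one]
    · have hrec := hμ.2 M h2
      have hA : ∀ p ∈ Icc 2 M, c^p * compSum μ p M = c^p * compSum (nuf b d) p M := by
        intro p hp
        simp only [Finset.mem_Icc] at hp
        congr 1
        exact compSum_congr fun k hk1 hk2 => ih k (by omega) hk1
      have hB : ∀ p ∈ Icc 1 (M-1), c^p * compSum μ p (M-1) = c^p * compSum (nuf b d) p (M-1) := by
        intro p hp
        simp only [Finset.mem_Icc] at hp
        congr 1
        exact compSum_congr fun k hk1 hk2 => ih k (by omega) hk1
      rw [Finset.sum_congr rfl hA, Finset.sum_congr rfl hB] at hrec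
      have hsp := Sfun_split c (nuf b d) (show 1 ≤ M by omega)
      have hkey := keyId a b c M (by omega)
      rw [← hd] at hkey
      have hS1 : (∑ p ∈ Finset.Icc 1 (M-1), c ^ p * compSum (nuf b d) p (M-1))
          = Sfun c (nuf b d) (M-1) := rfl
      rw [hS1] at hrec
      have hS2 : (∑ p ∈ Finset.Icc 2 M, c ^ p * compSum (nuf b d) p M)
          = Sfun c (nuf b d) M - c * nuf b d M := by rw [hsp]; ring
      rw [hS2] at hrec
      rw [hrec]
      linear_combination hkey

lemma nuf_sum_bound_eq (b d : ℝ) (n : ℕ) :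
    nuf b d (n+1) + ∑ k ∈ Icc 1 n, nuf b d k * ((b*d)^(n+1-k) * (catalan (n+1-k) : ℝ))
      = b^(n+1) * d^n * (catalan (n+1) : ℝ) := by
  have hterm : ∀ k, 1 ≤ k → k ≤ n →
      nuf b d k * ((b*d)^(n+1-k) * (catalan (n+1-k) : ℝ))
        = ((catalan (k-1) * catalan (n+1-k) : ℕ) : ℝ) * (b^(n+1) * d^n) := by
    intro k hk1 hk2
    rw [nuf, mul_pow]
    have hb : b^k * b^(n+1-k) = b^(n+1) := by rw [← pow_add]; congr 1; omega
    have hd : d^(k-1) * d^(n+1-k) = d^n := by rw [← pow_add]; congr 1; omega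
    rw [← hb, ← hd]
    push_cast
    ring
  have hsum : ∑ k ∈ Icc 1 n, nuf b d k * ((b*d)^(n+1-k) * (catalan (n+1-k) : ℝ))
      = ∑ k ∈ Icc 1 n, ((catalan (k-1) * catalan (n+1-k) : ℕ) : ℝ) * (b^(n+1) * d^n) := by
    refine Finset.sum_congr rfl fun k hk => ?_
    simp only [Finset.mem_Icc] at hk
    exact hterm k hk.1 hk.2
  rw [hsum, ← Finset.sum_mul]
  have hN : (∑ k ∈ Icc 1 n, ((catalan (k-1) * catalan (n+1-k) : ℕ) : ℝ)) + (catalan n : ℝ)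
      = (catalan (n+1) : ℝ) := by
    rw [← Nat.cast_sum]
    have h2 : (∑ k ∈ Icc 1 n, catalan (k-1) * catalan (n+1-k)) + catalan n
        = ∑ k ∈ Icc 1 (n+1), catalan (k-1) * catalan (n+1-k) := by
      rw [Finset.sum_Icc_succ_top (by omega : 1 ≤ n+1)]
      congr 1
      rw [show n+1-(n+1) = 0 from by omega, show n+1-1 = n from rfl, catalan_zero, mul_one]
    have h3 : ∑ k ∈ Icc 1 (n+1), catalan (k-1) * catalan (n+1-k) = catalan (n+1) := by
      rw [sum_Icc_one (fun k => catalan (k-1) * catalan (n+1-k)) n]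
      rw [← catConv n]
      refine Finset.sum_congr rfl fun i hi => ?_
      simp only [Finset.mem_range] at hi
      rw [show i+1-1 = i from rfl, show n+1-(i+1) = n-i from by omega]
    push_cast [← h3, ← h2]
    ring
  rw [nuf, show n+1-1 = n from rfl]
  linear_combination (b^(n+1) * d^n) * hN

lemma Wbound (a b c : ℝ) (ha : 0 < a) (hb : 0 < b) (hc : 0 < c) :
    ∀ m, Sfun c (nuf b (c+a*c^2)) m ≤ (b*(c+a*c^2))^m * (catalan m : ℝ) := by
  intro M
  induction M using Nat.strong_induction_on with
  | _ M ih =>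
    rcases Nat.eq_zero_or_pos M with rfl | hM
    · simp [Sfun]
    obtain ⟨n, rfl⟩ : ∃ n, M = n + 1 := ⟨M - 1, by omega⟩
    set d := c + a*c^2 with hd
    have hd0 : 0 < d := by rw [hd]; positivity
    have hcd : c ≤ d := by rw [hd]; nlinarith
    rw [Sfun_conv c (nuf b d) (show 1 ≤ n+1 by omega), show n+1-1 = n from rfl]
    have hstep : ∑ k ∈ Icc 1 n, nuf b d k * Sfun c (nuf b d) (n+1-k)
        ≤ ∑ k ∈ Icc 1 n, nuf b d k * ((b*d)^(n+1-k) * (catalan (n+1-k) : ℝ)) := by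
      refine Finset.sum_le_sum fun k hk => ?_
      simp only [Finset.mem_Icc] at hk
      exact mul_le_mul_of_nonneg_left (ih (n+1-k) (by omega))
        (nuf_nonneg hb.le hd0.le k)
    have h1 : c * nuf b d (n+1) + c * ∑ k ∈ Icc 1 n, nuf b d k * Sfun c (nuf b d) (n+1-k)
        ≤ c * (b^(n+1) * d^n * (catalan (n+1) : ℝ)) := by
      rw [← nuf_sum_bound_eq b d n, mul_add]
      exact add_le_add_right (mul_le_mul_of_nonneg_left hstep hc.le) _
    refine h1.trans ?_
    have h2 : (b*d)^(n+1) * (catalan (n+1) : ℝ) = d * (b^(n+1) * d^n * (catalan (n+1) : ℝ)) := by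
      rw [mul_pow, pow_succ]
      ring
    rw [h2]
    have hnn : 0 ≤ b^(n+1) * d^n * (catalan (n+1) : ℝ) := by positivity
    exact mul_le_mul_of_nonneg_right hcd hnn

/-- With `χ_m = a Σ_{p=1}^m c^p Σ_{k_1+⋯+k_p=m, k_i≥1} μ_{k_1}⋯μ_{k_p}`, one has
`χ_m ≤ a (4b(c + ac²))^m` for every `m ≥ 1`. -/
theorem chi_le_pow (a b c : ℝ) (ha : 0 < a) (hb : 0 < b) (hc : 0 < c)
    (μ : ℕ → ℝ) (hμ : IsMuSeq a b c μ) :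
    ∀ m, 1 ≤ m →
      a * ∑ p ∈ Finset.Icc 1 m, c ^ p * compSum μ p m
        ≤ a * (4 * b * (c + a * c ^ 2)) ^ m := by
  intro m hm
  have hμν : ∑ p ∈ Finset.Icc 1 m, c ^ p * compSum μ p m = Sfun c (nuf b (c+a*c^2)) m := by
    rw [Sfun]
    refine Finset.sum_congr rfl fun p hp => ?_
    congr 1
    exact compSum_congr fun k hk1 _ => muEq a b c μ hμ k hk1
  rw [hμν]
  have h1 := Wbound a b c ha hb hc m
  have h2 : (b*(c+a*c^2))^m * (catalan m : ℝ) ≤ (4 * b * (c + a * c ^ 2)) ^ m := by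
    have hc4 : (catalan m : ℝ) ≤ 4 ^ m := by exact_mod_cast cat_le_four_pow m
    have hnn : (0:ℝ) ≤ (b*(c+a*c^2))^m := by positivity
    calc (b*(c+a*c^2))^m * (catalan m : ℝ) ≤ (b*(c+a*c^2))^m * 4^m :=
          mul_le_mul_of_nonneg_left hc4 hnn
      _ = (4 * b * (c + a * c ^ 2)) ^ m := by rw [← mul_pow]; ring_nf
  exact mul_le_mul_of_nonneg_left (h1.trans h2) ha.le
end

section
/- Let n be a nonempty finite type, let H, Q : Matrix n n ℂ with H Hermitian (Hᴴ = H), let ψ ∈ EuclideanSpace ℂ n be a unit vector, and let t ≥ 0 be real. Set Q(t) = exp(i t H) · Q · exp(−i t H) (matrix exponential). Then |⟪ψ, (Q(t) − Q) ψ⟫| ≤ t · ‖H·Q − Q·H‖, where ‖·‖ denotes the operator norm induced by the Euclidean norm on ℂⁿ. -/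
open Matrix

/-- The operator norm of a complex matrix induced by the Euclidean norm on `ℂⁿ`. -/
noncomputable def matOpNorm {n : Type*} [Fintype n] [DecidableEq n] (A : Matrix n n ℂ) : ℝ :=
  ‖Matrix.toEuclideanCLM (𝕜 := ℂ) A‖

set_option linter.unusedSectionVars false

section Aux
open NormedSpace

variable {𝓐 : Type*} [NormedRing 𝓐] [StarRing 𝓐] [CStarRing 𝓐] [NormedAlgebra ℂ 𝓐]
  [CompleteSpace 𝓐] [StarModule ℂ 𝓐] [Nontrivial 𝓐]

lemma norm_exp_I_smul_selfAdjoint (a : 𝓐) (ha : IsSelfAdjoint a) :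
    ‖NormedSpace.exp (Complex.I • a)‖ = 1 :=
  letI : NormedAlgebra ℚ 𝓐 := NormedAlgebra.restrictScalars ℚ ℂ 𝓐
  CStarRing.norm_coe_unitary
    (⟨_, NormedSpace.exp_mem_unitary_of_mem_skewAdjoint
      (ha.smul_mem_skewAdjoint Complex.conj_I)⟩ : unitary 𝓐)

lemma real_smul_eq (s : ℝ) (A : 𝓐) : ((s:ℂ)) • A = s • A := by
  rw [← smul_one_smul ℂ s A]
  norm_num

lemma smul_rearrange (s : ℝ) (A : 𝓐) : (Complex.I * (s:ℂ)) • A = s • (Complex.I • A) := by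
  rw [smul_comm, ← real_smul_eq, smul_smul, mul_comm]

example (A : 𝓐) : NormedSpace.exp A = NormedSpace.exp A := by
  rfl

example (s : ℝ) (A : 𝓐) (hA : IsSelfAdjoint A) : IsSelfAdjoint (s • A) :=
  IsSelfAdjoint.smul (star_trivial s) hA

-- key lemma
lemma key (A B : 𝓐) (hA : IsSelfAdjoint A) (t : ℝ) (ht : 0 ≤ t) :
    ‖NormedSpace.exp ((Complex.I * (t:ℂ)) • A) * B *
        NormedSpace.exp (-(Complex.I * (t:ℂ)) • A) - B‖ ≤ t * ‖A * B - B * A‖ := by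
  set M : 𝓐 := Complex.I • A with hM
  set F : ℝ → 𝓐 := fun s => NormedSpace.exp (s • M) * B * NormedSpace.exp (s • (-M)) with hF
  have hexp : ∀ s : ℝ, NormedSpace.exp (s • M) = NormedSpace.exp ((Complex.I * (s:ℂ)) • A) := by
    intro s; rw [smul_rearrange]
  have hexp' : ∀ s : ℝ, NormedSpace.exp (s • (-M)) = NormedSpace.exp (-(Complex.I * (s:ℂ)) • A) := by
    intro s
    congr 1
    rw [smul_neg, neg_smul, smul_rearrange]
  -- norms of the exponentials are 1
  have hnorm : ∀ s : ℝ, ‖NormedSpace.exp (s • M)‖ = 1 := by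
    intro s
    rw [hM, smul_comm]
    exact norm_exp_I_smul_selfAdjoint _ (IsSelfAdjoint.smul (star_trivial s) hA)
  have hnorm' : ∀ s : ℝ, ‖NormedSpace.exp (s • (-M))‖ = 1 := by
    intro s
    rw [hM, ← smul_neg, smul_comm]
    exact norm_exp_I_smul_selfAdjoint _ (IsSelfAdjoint.smul (star_trivial s) hA.neg)
  -- derivative
  have hderiv : ∀ s : ℝ, HasDerivAt F
      (NormedSpace.exp (s • M) * (M * B - B * M) * NormedSpace.exp (s • (-M))) s := by
    intro s
    have h1 : HasDerivAt (fun u : ℝ => NormedSpace.exp (u • M)) (NormedSpace.exp (s • M) * M) s :=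
      hasDerivAt_exp_smul_const M s
    have h2 : HasDerivAt (fun u : ℝ => NormedSpace.exp (u • (-M))) (NormedSpace.exp (s • (-M)) * (-M)) s :=
      hasDerivAt_exp_smul_const (-M) s
    have h3 := (h1.mul_const B).mul h2
    convert h3 using 1
    · rfl
    have hcomm : NormedSpace.exp (s • (-M)) * (-M) = (-M) * NormedSpace.exp (s • (-M)) :=
      (((Commute.refl (-M)).smul_right s).exp_right).eq.symm
    rw [hcomm]
    noncomm_ring
  -- bound on derivative
  have hbound : ∀ s : ℝ, ‖NormedSpace.exp (s • M) * (M * B - B * M) * NormedSpace.exp (s • (-M))‖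
      ≤ ‖A * B - B * A‖ := by
    intro s
    calc ‖NormedSpace.exp (s • M) * (M * B - B * M) * NormedSpace.exp (s • (-M))‖
        ≤ ‖NormedSpace.exp (s • M) * (M * B - B * M)‖ * ‖NormedSpace.exp (s • (-M))‖ := norm_mul_le _ _
      _ ≤ ‖NormedSpace.exp (s • M)‖ * ‖M * B - B * M‖ * ‖NormedSpace.exp (s • (-M))‖ := by
          gcongr; exact norm_mul_le _ _
      _ = ‖M * B - B * M‖ := by rw [hnorm, hnorm']; ring
      _ = ‖A * B - B * A‖ := by
          rw [hM]
          rw [show Complex.I • A * B - B * (Complex.I • A) = Complex.I • (A * B - B * A) by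
            rw [smul_mul_assoc, mul_smul_comm, smul_sub]]
          rw [norm_smul, Complex.norm_I, one_mul]
  -- mean value inequality
  have := norm_image_sub_le_of_norm_deriv_le_segment'
    (f := F) (f' := fun s => NormedSpace.exp (s • M) * (M * B - B * M) * NormedSpace.exp (s • (-M)))
    (a := 0) (b := t) (C := ‖A * B - B * A‖)
    (fun x _ => (hderiv x).hasDerivWithinAt) (fun x _ => hbound x) t (Set.right_mem_Icc.2 ht)
  have hF0 : F 0 = B := by
    simp [hF, zero_smul, NormedSpace.exp_zero]
  rw [hF0, sub_zero] at this
  calc ‖NormedSpace.exp ((Complex.I * (t:ℂ)) • A) * B *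
        NormedSpace.exp (-(Complex.I * (t:ℂ)) • A) - B‖
      = ‖F t - B‖ := by rw [hF]; simp only [hexp t, hexp' t]
    _ ≤ ‖A * B - B * A‖ * t := this
    _ = t * ‖A * B - B * A‖ := mul_comm _ _

open Matrix

lemma toEuclideanCLM_exp {n : Type*} [Fintype n] [DecidableEq n] (X : Matrix n n ℂ) :
    Matrix.toEuclideanCLM (𝕜 := ℂ) (NormedSpace.exp X)
      = NormedSpace.exp (Matrix.toEuclideanCLM (𝕜 := ℂ) X) := by
  letI : MetricSpace (Matrix n n ℂ) := Matrix.instL2OpMetricSpace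
  letI : NormedAddCommGroup (Matrix n n ℂ) := Matrix.instL2OpNormedAddCommGroup
  letI : NormedRing (Matrix n n ℂ) := Matrix.instL2OpNormedRing
  letI : NormedAlgebra ℂ (Matrix n n ℂ) := Matrix.instL2OpNormedAlgebra
  letI : NormedAlgebra ℚ (Matrix n n ℂ) := NormedAlgebra.restrictScalars ℚ ℂ _
  exact NormedSpace.map_exp (Matrix.toEuclideanCLM (𝕜 := ℂ) : Matrix n n ℂ ≃⋆ₐ[ℂ] _)
    (by have := LinearMap.continuous_of_finiteDimensional
          (Matrix.toEuclideanCLM (𝕜 := ℂ) : Matrix n n ℂ ≃⋆ₐ[ℂ] _).toAlgEquiv.toLinearMap; exact this) X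

end Aux

set_option maxHeartbeats 1000000 in
/-- For a Hermitian `H`, a unit vector `ψ`, and `t ≥ 0`, the Heisenberg-evolved observable
`Q(t) = e^{itH} Q e^{−itH}` satisfies `|⟪ψ, (Q(t) − Q)ψ⟫| ≤ t ‖[H, Q]‖`. -/
theorem heisenberg_evolution_bound {n : Type*} [Fintype n] [DecidableEq n] [Nonempty n]
    (H Q : Matrix n n ℂ) (hH : Hᴴ = H)
    (ψ : EuclideanSpace ℂ n) (hψ : ‖ψ‖ = 1) (t : ℝ) (ht : 0 ≤ t) :
    ‖(inner (𝕜 := ℂ) ψ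
        (Matrix.toEuclideanCLM (𝕜 := ℂ)
          (NormedSpace.exp ((Complex.I * (t : ℂ)) • H) * Q *
              NormedSpace.exp (-(Complex.I * (t : ℂ)) • H) - Q) ψ) : ℂ)‖
      ≤ t * matOpNorm (H * Q - Q * H) := by
  set π := Matrix.toEuclideanCLM (𝕜 := ℂ) (n := n)
  set A := π H with hA
  set B := π Q with hB
  have hπ : π (NormedSpace.exp ((Complex.I * (t : ℂ)) • H) * Q *
      NormedSpace.exp (-(Complex.I * (t : ℂ)) • H) - Q)
      = NormedSpace.exp ((Complex.I * (t : ℂ)) • A) * B *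
        NormedSpace.exp (-(Complex.I * (t : ℂ)) • A) - B := by
    rw [map_sub, _root_.map_mul, _root_.map_mul, toEuclideanCLM_exp, toEuclideanCLM_exp, _root_.map_smul, _root_.map_smul]
  have hAsa : _root_.IsSelfAdjoint A := by
    have hstar : star H = H := by rw [Matrix.star_eq_conjTranspose, hH]
    rw [_root_.IsSelfAdjoint, hA, ← map_star, hstar]
  have hkey := key A B hAsa t ht
  have hnormeq : matOpNorm (H * Q - Q * H) = ‖A * B - B * A‖ := by
    rw [matOpNorm]
    congr 1
    rw [map_sub, _root_.map_mul, _root_.map_mul]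
  rw [hπ, hnormeq]
  set C := NormedSpace.exp ((Complex.I * (t : ℂ)) • A) * B *
        NormedSpace.exp (-(Complex.I * (t : ℂ)) • A) - B
  calc ‖inner (𝕜 := ℂ) ψ (C ψ)‖
      = ‖inner (𝕜 := ℂ) ψ (C ψ)‖ := rfl
    _ ≤ ‖ψ‖ * ‖C ψ‖ := norm_inner_le_norm _ _
    _ ≤ ‖ψ‖ * (‖C‖ * ‖ψ‖) := by gcongr; exact C.le_opNorm ψ
    _ = ‖C‖ := by rw [hψ]; ring
    _ ≤ t * ‖A * B - B * A‖ := hkey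
end

section
/- Let L ≥ 2 and consider the chain of L qubits with Hilbert space ℂ^(Fin L → Fin 2), with single-site operators Z_j, P_j, M_j at site j (acting as Z = !![1,0;0,−1], P = !![0,1;0,0], M = !![0,0;1,0] on site j and as identity elsewhere), and periodic site indexing j+1 taken mod L. Let t₁, t₂, u₀, w₀ ∈ ℂ and Γ ∈ ℂ, and define H₀ = Γ·Σ_j Z_j, T₊₂ = t₂·Σ_j P_j P_{j+1}, T₋₂ = t₂·Σ_j M_j M_{j+1}, T₊₁ = t₁·Σ_j (P_j Z_{j+1} + Z_j P_{j+1}), T₋₁ = t₁·Σ_j (M_j Z_{j+1} + Z_j M_{j+1}), and T₀ = u₀·Σ_j Z_j Z_{j+1} + w₀·Σ_j (P_j M_{j+1} + M_j P_{j+1}). Then for every ℓ ∈ {−2, −1, 0, 1, 2}, [H₀, T_ℓ] = 2 Γ ℓ · T_ℓ. -/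
open Finset

/-- The operator acting as the 2×2 matrix `A` on site `j` of a chain of `L` qubits and as
the identity on all other sites. -/
noncomputable def siteOp (L : ℕ) (A : Matrix (Fin 2) (Fin 2) ℂ) (j : Fin L) :
    Matrix (Fin L → Fin 2) (Fin L → Fin 2) ℂ :=
  fun s t => A (s j) (t j) *
    ∏ i ∈ Finset.univ.filter (fun i => i ≠ j), (if s i = t i then (1 : ℂ) else 0)

noncomputable def Zmat : Matrix (Fin 2) (Fin 2) ℂ := !![1, 0; 0, -1]
noncomputable def Pmat : Matrix (Fin 2) (Fin 2) ℂ := !![0, 1; 0, 0]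
noncomputable def Mmat : Matrix (Fin 2) (Fin 2) ℂ := !![0, 0; 1, 0]

/-- The generalized ladder operators `T_ℓ`, `ℓ = −2, …, 2`, built from `P`, `M`, `Z`, with
periodic site indexing (`j + 1` taken mod `L`). -/
noncomputable def Tladder (L : ℕ) [NeZero L] (t₁ t₂ u₀ w₀ : ℂ) (ℓ : ℤ) :
    Matrix (Fin L → Fin 2) (Fin L → Fin 2) ℂ :=
  if ℓ = 2 then t₂ • ∑ j, siteOp L Pmat j * siteOp L Pmat (j + 1)
  else if ℓ = -2 then t₂ • ∑ j, siteOp L Mmat j * siteOp L Mmat (j + 1)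
  else if ℓ = 1 then
    t₁ • ∑ j, (siteOp L Pmat j * siteOp L Zmat (j + 1) + siteOp L Zmat j * siteOp L Pmat (j + 1))
  else if ℓ = -1 then
    t₁ • ∑ j, (siteOp L Mmat j * siteOp L Zmat (j + 1) + siteOp L Zmat j * siteOp L Mmat (j + 1))
  else if ℓ = 0 then
    u₀ • ∑ j, siteOp L Zmat j * siteOp L Zmat (j + 1) +
    w₀ • ∑ j, (siteOp L Pmat j * siteOp L Mmat (j + 1) + siteOp L Mmat j * siteOp L Pmat (j + 1))
  else 0

lemma siteOp_apply (L : ℕ) (A : Matrix (Fin 2) (Fin 2) ℂ) (j : Fin L) (s t : Fin L → Fin 2) :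
    siteOp L A j s t = A (s j) (t j) * (if ∀ i, i ≠ j → s i = t i then 1 else 0) := by
  unfold siteOp
  congr 1
  rw [Finset.prod_boole]
  simp

lemma filter_eq_image (L : ℕ) (s : Fin L → Fin 2) (j : Fin L) :
    (Finset.univ.filter (fun u : Fin L → Fin 2 => ∀ i, i ≠ j → u i = s i))
      = Finset.univ.image (fun k : Fin 2 => Function.update s j k) := by
  ext u
  simp only [Finset.mem_filter, Finset.mem_univ, true_and, Finset.mem_image]
  constructor
  · intro h
    refine ⟨u j, ?_⟩
    funext i
    by_cases hi : i = j
    · subst hi; simp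
    · simp [Function.update_of_ne hi, h i hi]
  · rintro ⟨k, rfl⟩ i hi
    simp [Function.update_of_ne hi]

lemma update_inj (L : ℕ) (s : Fin L → Fin 2) (j : Fin L) :
    ∀ a ∈ Finset.univ, ∀ b ∈ Finset.univ,
      Function.update s j a = Function.update s j b → a = b := by
  intro a _ b _ hab
  simpa using congrFun hab j

lemma siteOp_mul_same (L : ℕ) (A B : Matrix (Fin 2) (Fin 2) ℂ) (j : Fin L) :
    siteOp L A j * siteOp L B j = siteOp L (A * B) j := by
  ext s t
  rw [Matrix.mul_apply]
  have hsum : ∀ u : Fin L → Fin 2,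
      siteOp L A j s u * siteOp L B j u t =
      if ∀ i, i ≠ j → u i = s i then
        A (s j) (u j) * B (u j) (t j) * (if ∀ i, i ≠ j → s i = t i then 1 else 0)
      else 0 := by
    intro u
    rw [siteOp_apply, siteOp_apply]
    by_cases h : ∀ i, i ≠ j → u i = s i
    · rw [if_pos h]
      have h1 : (∀ i, i ≠ j → s i = u i) := fun i hi => (h i hi).symm
      rw [if_pos h1]
      have h2 : (∀ i, i ≠ j → u i = t i) ↔ (∀ i, i ≠ j → s i = t i) := by
        constructor <;> intro hh i hi
        · rw [← h i hi]; exact hh i hi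
        · rw [h i hi]; exact hh i hi
      by_cases h3 : ∀ i, i ≠ j → s i = t i
      · rw [if_pos (h2.mpr h3), if_pos h3]; ring
      · rw [if_neg (fun hc => h3 (h2.mp hc)), if_neg h3]; ring
    · rw [if_neg h]
      have hh : ¬ ∀ i, i ≠ j → s i = u i := fun hc => h (fun i hi => (hc i hi).symm)
      rw [if_neg hh]; ring
  simp only [hsum]
  rw [Finset.sum_ite, Finset.sum_const_zero, add_zero, filter_eq_image,
    Finset.sum_image (update_inj L s j)]
  simp only [Function.update_self]
  rw [siteOp_apply, Matrix.mul_apply, Finset.sum_mul]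

lemma siteOp_mul_apply_ne (L : ℕ) (A B : Matrix (Fin 2) (Fin 2) ℂ) {i j : Fin L}
    (hij : i ≠ j) (s t : Fin L → Fin 2) :
    (siteOp L A i * siteOp L B j) s t =
      A (s i) (t i) * B (s j) (t j) *
        (if ∀ l, l ≠ i → l ≠ j → s l = t l then 1 else 0) := by
  rw [Matrix.mul_apply]
  have hsum : ∀ u : Fin L → Fin 2,
      siteOp L A i s u * siteOp L B j u t =
      if ∀ l, l ≠ i → u l = s l then
        A (s i) (u i) * ((siteOp L B j) u t)
      else 0 := by
    intro u
    rw [siteOp_apply]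
    by_cases h : ∀ l, l ≠ i → u l = s l
    · rw [if_pos h, if_pos (fun l hl => (h l hl).symm), mul_one]
    · rw [if_neg h, if_neg (fun hc => h fun l hl => (hc l hl).symm), mul_zero, zero_mul]
  simp only [hsum]
  rw [Finset.sum_ite, Finset.sum_const_zero, add_zero, filter_eq_image,
    Finset.sum_image (update_inj L s i)]
  simp only [Function.update_self]
  have hterm : ∀ k : Fin 2,
      A (s i) k * (siteOp L B j) (Function.update s i k) t =
      if k = t i then
        A (s i) k * B (s j) (t j) * (if ∀ l, l ≠ i → l ≠ j → s l = t l then 1 else 0)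
      else 0 := by
    intro k
    rw [siteOp_apply, Function.update_of_ne (Ne.symm hij)]
    have hcond : (∀ l, l ≠ j → Function.update s i k l = t l) ↔
        (k = t i ∧ ∀ l, l ≠ i → l ≠ j → s l = t l) := by
      constructor
      · intro h
        refine ⟨by simpa using h i hij, fun l h1 h2 => ?_⟩
        have := h l h2
        rwa [Function.update_of_ne h1] at this
      · rintro ⟨hk, h⟩ l hl
        by_cases hli : l = i
        · subst hli; simpa using hk
        · rw [Function.update_of_ne hli]; exact h l hli hl
    by_cases hk : k = t i
    · rw [if_pos hk]
      by_cases hD : ∀ l, l ≠ i → l ≠ j → s l = t l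
      · rw [if_pos (hcond.mpr ⟨hk, hD⟩), if_pos hD]; ring
      · rw [if_neg (fun hc => hD (hcond.mp hc).2), if_neg hD]; ring
    · rw [if_neg hk, if_neg (fun hc => hk (hcond.mp hc).1)]
      ring
  simp only [hterm]
  rw [Finset.sum_ite_eq' Finset.univ (t i)]
  simp

lemma siteOp_comm (L : ℕ) (A B : Matrix (Fin 2) (Fin 2) ℂ) {i j : Fin L} (hij : i ≠ j) :
    siteOp L A i * siteOp L B j = siteOp L B j * siteOp L A i := by
  ext s t
  rw [siteOp_mul_apply_ne L A B hij, siteOp_mul_apply_ne L B A hij.symm]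
  have hc : (∀ l, l ≠ i → l ≠ j → s l = t l) ↔ (∀ l, l ≠ j → l ≠ i → s l = t l) :=
    ⟨fun h l h1 h2 => h l h2 h1, fun h l h1 h2 => h l h2 h1⟩
  rw [if_congr hc rfl rfl]; ring

lemma siteOp_sub (L : ℕ) (A B : Matrix (Fin 2) (Fin 2) ℂ) (j : Fin L) :
    siteOp L (A - B) j = siteOp L A j - siteOp L B j := by
  ext s t
  simp only [siteOp, Matrix.sub_apply]
  ring

lemma siteOp_smul (L : ℕ) (c : ℂ) (A : Matrix (Fin 2) (Fin 2) ℂ) (j : Fin L) :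
    siteOp L (c • A) j = c • siteOp L A j := by
  ext s t
  simp only [siteOp, Matrix.smul_apply, smul_eq_mul]
  ring

lemma succ_ne (L : ℕ) [NeZero L] (hL : 2 ≤ L) (j : Fin L) : j ≠ j + 1 := by
  intro h
  have h1 : (0 : Fin L) = 1 :=
    add_left_cancel (a := j) (b := (0 : Fin L)) (c := 1) (by simpa using h)
  have := Fin.one_eq_zero_iff.mp h1.symm
  omega

lemma comm_Zsum_pair (L : ℕ) [NeZero L] (hL : 2 ≤ L) (A B : Matrix (Fin 2) (Fin 2) ℂ)
    (cA cB : ℂ) (hA : Zmat * A - A * Zmat = cA • A) (hB : Zmat * B - B * Zmat = cB • B)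
    (j : Fin L) :
    (∑ k, siteOp L Zmat k) * (siteOp L A j * siteOp L B (j + 1)) -
      (siteOp L A j * siteOp L B (j + 1)) * (∑ k, siteOp L Zmat k) =
    (cA + cB) • (siteOp L A j * siteOp L B (j + 1)) := by
  have hj : j ≠ j + 1 := succ_ne L hL j
  set X := siteOp L A j * siteOp L B (j + 1) with hX
  rw [Finset.sum_mul, Finset.mul_sum, ← Finset.sum_sub_distrib]
  have hzero : ∀ k ∈ Finset.univ, k ∉ ({j, j + 1} : Finset (Fin L)) →
      siteOp L Zmat k * X - X * siteOp L Zmat k = 0 := by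
    intro k _ hk
    simp only [Finset.mem_insert, Finset.mem_singleton, not_or] at hk
    obtain ⟨h1, h2⟩ := hk
    rw [hX, ← mul_assoc, siteOp_comm L Zmat A h1, mul_assoc,
      siteOp_comm L Zmat B h2, ← mul_assoc, sub_self]
  rw [← Finset.sum_subset (Finset.subset_univ ({j, j+1} : Finset (Fin L))) hzero,
    Finset.sum_pair hj]
  have e1 : siteOp L Zmat j * X - X * siteOp L Zmat j = cA • X := by
    rw [hX, ← mul_assoc, siteOp_mul_same, mul_assoc, siteOp_comm L B Zmat hj.symm,
      ← mul_assoc, siteOp_mul_same, ← sub_mul, ← siteOp_sub, hA, siteOp_smul, smul_mul_assoc]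
  have e2 : siteOp L Zmat (j+1) * X - X * siteOp L Zmat (j+1) = cB • X := by
    rw [hX, ← mul_assoc, ← siteOp_comm L A Zmat hj, mul_assoc, mul_assoc,
      siteOp_mul_same, siteOp_mul_same, ← mul_sub, ← siteOp_sub, hB, siteOp_smul, mul_smul_comm]
  rw [e1, e2, ← add_smul]

lemma comm_Zsum_sum (L : ℕ) [NeZero L]
    (f : Fin L → Matrix (Fin L → Fin 2) (Fin L → Fin 2) ℂ) (e : ℂ)
    (h : ∀ j, (∑ k, siteOp L Zmat k) * f j - f j * (∑ k, siteOp L Zmat k) = e • f j) :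
    (∑ k, siteOp L Zmat k) * (∑ j, f j) - (∑ j, f j) * (∑ k, siteOp L Zmat k) =
      e • ∑ j, f j := by
  rw [Finset.mul_sum, Finset.sum_mul, ← Finset.sum_sub_distrib, Finset.smul_sum]
  exact Finset.sum_congr rfl fun j _ => h j

lemma hZP : Zmat * Pmat - Pmat * Zmat = (2 : ℂ) • Pmat := by
  ext i k
  fin_cases i <;> fin_cases k <;>
    simp [Zmat, Pmat, Matrix.mul_apply, Fin.sum_univ_two] <;> norm_num

lemma hZM : Zmat * Mmat - Mmat * Zmat = (-2 : ℂ) • Mmat := by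
  ext i k
  fin_cases i <;> fin_cases k <;>
    simp [Zmat, Mmat, Matrix.mul_apply, Fin.sum_univ_two] <;> norm_num

lemma hZZ : Zmat * Zmat - Zmat * Zmat = (0 : ℂ) • Zmat := by simp

lemma scal_comm (n : Type*) [Fintype n] [DecidableEq n] (H S : Matrix n n ℂ)
    (Γ c e : ℂ) (hS : H * S - S * H = e • S) :
    (Γ • H) * (c • S) - (c • S) * (Γ • H) = (Γ * e * c) • S := by
  rw [smul_mul_assoc, mul_smul_comm, smul_mul_assoc, mul_smul_comm, smul_smul, smul_smul,
    mul_comm c Γ, ← smul_sub, hS, smul_smul]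
  congr 1
  ring

/-- For `H₀ = Γ Σ_j Z_j` on a periodic chain of `L ≥ 2` qubits, each `T_ℓ` is a generalized
ladder operator: `[H₀, T_ℓ] = 2 Γ ℓ T_ℓ` for `ℓ ∈ {−2, −1, 0, 1, 2}`. -/
theorem H0_commutator_Tladder (L : ℕ) [NeZero L] (hL : 2 ≤ L)
    (t₁ t₂ u₀ w₀ Γ : ℂ) (ℓ : ℤ) (hℓ₁ : -2 ≤ ℓ) (hℓ₂ : ℓ ≤ 2) :
    (Γ • ∑ j, siteOp L Zmat j) * Tladder L t₁ t₂ u₀ w₀ ℓ -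
        Tladder L t₁ t₂ u₀ w₀ ℓ * (Γ • ∑ j, siteOp L Zmat j) =
      (2 * Γ * (ℓ : ℂ)) • Tladder L t₁ t₂ u₀ w₀ ℓ := by
  set H := ∑ j, siteOp L Zmat j with hH
  interval_cases ℓ
  · -- ℓ = -2
    rw [show Tladder L t₁ t₂ u₀ w₀ (-2) =
        t₂ • ∑ j, siteOp L Mmat j * siteOp L Mmat (j + 1) by rw [Tladder]; norm_num]
    have hS := comm_Zsum_sum L (fun j => siteOp L Mmat j * siteOp L Mmat (j + 1)) (-4)
      (fun j => by
        have := comm_Zsum_pair L hL Mmat Mmat (-2) (-2) hZM hZM j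
        rw [← hH] at this; rw [this]; norm_num)
    rw [scal_comm _ H _ Γ t₂ (-4) hS, smul_smul]
    congr 1
    push_cast
    ring
  · -- ℓ = -1
    rw [show Tladder L t₁ t₂ u₀ w₀ (-1) = t₁ • ∑ j,
        (siteOp L Mmat j * siteOp L Zmat (j + 1) + siteOp L Zmat j * siteOp L Mmat (j + 1))
        by rw [Tladder]; norm_num]
    have hS := comm_Zsum_sum L (fun j =>
        siteOp L Mmat j * siteOp L Zmat (j + 1) + siteOp L Zmat j * siteOp L Mmat (j + 1)) (-2)
      (fun j => by
        have h1 := comm_Zsum_pair L hL Mmat Zmat (-2) 0 hZM hZZ j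
        have h2 := comm_Zsum_pair L hL Zmat Mmat 0 (-2) hZZ hZM j
        rw [← hH] at h1 h2
        rw [mul_add, add_mul, show ∀ a b c d : Matrix (Fin L → Fin 2) (Fin L → Fin 2) ℂ,
          a + b - (c + d) = (a - c) + (b - d) from fun a b c d => by abel, h1, h2, smul_add]
        norm_num)
    rw [scal_comm _ H _ Γ t₁ (-2) hS, smul_smul]
    congr 1
    push_cast
    ring
  · -- ℓ = 0
    rw [show Tladder L t₁ t₂ u₀ w₀ 0 =
        u₀ • ∑ j, siteOp L Zmat j * siteOp L Zmat (j + 1) +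
        w₀ • ∑ j, (siteOp L Pmat j * siteOp L Mmat (j + 1) +
          siteOp L Mmat j * siteOp L Pmat (j + 1)) by rw [Tladder]; norm_num]
    have hS1 := comm_Zsum_sum L (fun j => siteOp L Zmat j * siteOp L Zmat (j + 1)) 0
      (fun j => by
        have := comm_Zsum_pair L hL Zmat Zmat 0 0 hZZ hZZ j
        rw [← hH] at this; rw [this]; norm_num)
    have hS2 := comm_Zsum_sum L (fun j =>
        siteOp L Pmat j * siteOp L Mmat (j + 1) + siteOp L Mmat j * siteOp L Pmat (j + 1)) 0
      (fun j => by
        have h1 := comm_Zsum_pair L hL Pmat Mmat 2 (-2) hZP hZM j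
        have h2 := comm_Zsum_pair L hL Mmat Pmat (-2) 2 hZM hZP j
        rw [← hH] at h1 h2
        rw [mul_add, add_mul, show ∀ a b c d : Matrix (Fin L → Fin 2) (Fin L → Fin 2) ℂ,
          a + b - (c + d) = (a - c) + (b - d) from fun a b c d => by abel, h1, h2, smul_add]
        norm_num)
    rw [zero_smul] at hS1 hS2
    have hc1 : H * (∑ j, siteOp L Zmat j * siteOp L Zmat (j + 1)) =
        (∑ j, siteOp L Zmat j * siteOp L Zmat (j + 1)) * H := sub_eq_zero.mp hS1
    have hc2 : H * (∑ j, (siteOp L Pmat j * siteOp L Mmat (j + 1) +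
        siteOp L Mmat j * siteOp L Pmat (j + 1))) =
        (∑ j, (siteOp L Pmat j * siteOp L Mmat (j + 1) +
          siteOp L Mmat j * siteOp L Pmat (j + 1))) * H := sub_eq_zero.mp hS2
    rw [mul_add, add_mul, mul_smul_comm, mul_smul_comm, smul_mul_assoc, smul_mul_assoc,
      smul_mul_assoc, smul_mul_assoc, mul_smul_comm, mul_smul_comm, hc1, hc2]
    push_cast
    simp [smul_smul]
  · -- ℓ = 1
    rw [show Tladder L t₁ t₂ u₀ w₀ 1 = t₁ • ∑ j,
        (siteOp L Pmat j * siteOp L Zmat (j + 1) + siteOp L Zmat j * siteOp L Pmat (j + 1))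
        by rw [Tladder]; norm_num]
    have hS := comm_Zsum_sum L (fun j =>
        siteOp L Pmat j * siteOp L Zmat (j + 1) + siteOp L Zmat j * siteOp L Pmat (j + 1)) 2
      (fun j => by
        have h1 := comm_Zsum_pair L hL Pmat Zmat 2 0 hZP hZZ j
        have h2 := comm_Zsum_pair L hL Zmat Pmat 0 2 hZZ hZP j
        rw [← hH] at h1 h2
        rw [mul_add, add_mul, show ∀ a b c d : Matrix (Fin L → Fin 2) (Fin L → Fin 2) ℂ,
          a + b - (c + d) = (a - c) + (b - d) from fun a b c d => by abel, h1, h2, smul_add]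
        norm_num)
    rw [scal_comm _ H _ Γ t₁ 2 hS, smul_smul]
    congr 1
    push_cast
    ring
  · -- ℓ = 2
    rw [show Tladder L t₁ t₂ u₀ w₀ 2 =
        t₂ • ∑ j, siteOp L Pmat j * siteOp L Pmat (j + 1) by rw [Tladder]; norm_num]
    have hS := comm_Zsum_sum L (fun j => siteOp L Pmat j * siteOp L Pmat (j + 1)) 4
      (fun j => by
        have := comm_Zsum_pair L hL Pmat Pmat 2 2 hZP hZP j
        rw [← hH] at this; rw [this]; norm_num)
    rw [scal_comm _ H _ Γ t₂ 4 hS, smul_smul]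
    congr 1
    push_cast
    ring
end
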